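/- arXiv:2509.16657 — 7 statements merged into one kernel-verified Lean document; each statement's English description precedes it below -/
import Mathlib

section
/- Let G = C(α₁,...,α_{2k}) with k ≥ 2 and α_{2k} = 1. Then the eccentric graph G^e is connected, and hence the eccentricity matrix ε(G) is irreducible. -/
open Finset Matrix

/-- The cograph `C(α₁,…,α_l)` obtained by the recursive construction
`C(α₁) = complement of K_{α₁}` and
`C(α₁,…,αᵢ) = complement of (C(α₁,…,αᵢ₋₁) ⊔ K_{αᵢ})`,
presented by its resulting explicit adjacency relation: two distinct vertices
in the same (0-based) block `i` are adjacent iff `l - 1 - i` is odd, and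
vertices in different blocks `a < b` are adjacent iff `l - 1 - b` is even. -/
def Cgraph (l : ℕ) (α : Fin l → ℕ) : SimpleGraph (Σ i : Fin l, Fin (α i)) where
  Adj u v := u ≠ v ∧ ((u.1 = v.1 ∧ Odd (l - 1 - u.1.val)) ∨
      (u.1 ≠ v.1 ∧ Even (l - 1 - max u.1.val v.1.val)))
  symm := by
    constructor
    rintro u v ⟨h1, h2⟩
    refine ⟨h1.symm, ?_⟩
    rcases h2 with ⟨he, ho⟩ | ⟨hne, hev⟩
    · exact Or.inl ⟨he.symm, he ▸ ho⟩
    · exact Or.inr ⟨hne.symm, by rwa [max_comm]⟩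
  loopless := by constructor; rintro u ⟨h, -⟩; exact h rfl

/-- The eccentricity of a vertex: the largest distance from it to any vertex. -/
noncomputable def ecc {V : Type*} [Fintype V] (G : SimpleGraph V) (v : V) : ℕ :=
  Finset.univ.sup fun u => G.dist v u

/-- The eccentricity matrix: entry `d(u,v)` if `d(u,v) = min (e u) (e v)`, else `0`. -/
noncomputable def eccMatrix {V : Type*} [Fintype V] (G : SimpleGraph V) :
    Matrix V V ℝ :=
  Matrix.of fun u v =>
    if G.dist u v = min (ecc G u) (ecc G v) then (G.dist u v : ℝ) else 0

/-- The eccentric graph `G^e`: `u ∼ v` iff `d(u,v) = min (e u) (e v)` for `u ≠ v`. -/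
noncomputable def eccGraph {V : Type*} [Fintype V] (G : SimpleGraph V) : SimpleGraph V where
  Adj u v := u ≠ v ∧ G.dist u v = min (ecc G u) (ecc G v)
  symm := by
    constructor
    rintro u v ⟨h1, h2⟩
    exact ⟨h1.symm, by rwa [SimpleGraph.dist_comm, min_comm]⟩
  loopless := by constructor; rintro u ⟨h, -⟩; exact h rfl

/-- A square matrix is irreducible if there is no nonempty proper subset `S` of
the index set with all entries from `S` to its complement equal to zero
(equivalently, no simultaneous permutation of rows and columns brings the matrix
to a nontrivial block upper-triangular form). -/
def MatIrreducible {n : Type*} (M : Matrix n n ℝ) : Prop :=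
  ¬ ∃ S : Set n, S.Nonempty ∧ Sᶜ.Nonempty ∧ ∀ u ∈ S, ∀ v ∈ Sᶜ, M u v = 0

/-- If `G = C(α₁,…,α_{2k})` with `k ≥ 2` and `α_{2k} = 1`, then the eccentric
graph `G^e` is connected, hence the eccentricity matrix `ε(G)` is irreducible. -/
theorem stmt1 (k : ℕ) (hk : 2 ≤ k) (α : Fin (2*k) → ℕ) (hα : ∀ i, 1 ≤ α i)
    (j : Fin (2*k)) (hj : j.val = 2*k - 1) (hlast : α j = 1) :
    (eccGraph (Cgraph (2*k) α)).Connected ∧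
    MatIrreducible (eccMatrix (Cgraph (2*k) α)) := by

  classical
  set G := Cgraph (2*k) α with hG
  let w : Σ i : Fin (2*k), Fin (α i) := ⟨j, ⟨0, hα j⟩⟩
  have hne_j : ∀ v : Σ i : Fin (2*k), Fin (α i), v ≠ w → v.1 ≠ j := by
    rintro ⟨a, b⟩ hv h
    apply hv
    dsimp only at h
    have h4 : α a = 1 := by rw [h, hlast]
    subst h
    have hb : b = ⟨0, hα a⟩ := by
      apply Fin.ext
      show (b : ℕ) = 0
      have h3 := b.isLt
      omega
    simp only [w, hb]
  have hadj : ∀ v : Σ i : Fin (2*k), Fin (α i), v ≠ w → G.Adj w v := by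
    intro v hv
    have h1 := hne_j v hv
    refine ⟨Ne.symm hv, Or.inr ⟨fun h => h1 h.symm, ?_⟩⟩
    have hm : max (j : Fin (2*k)).val v.1.val = j.val := by
      have := v.1.isLt; omega
    rw [hm]
    simp [hj]
  have hdist : ∀ v : Σ i : Fin (2*k), Fin (α i), v ≠ w → G.dist w v = 1 := by
    intro v hv
    exact SimpleGraph.dist_eq_one_iff_adj.mpr (hadj v hv)
  -- a vertex distinct from w
  have h2k : 0 < 2*k := by omega
  let v0 : Σ i : Fin (2*k), Fin (α i) := ⟨⟨0, h2k⟩, ⟨0, hα _⟩⟩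
  have hv0 : v0 ≠ w := by
    intro h
    have h1 : (v0.1 : Fin (2*k)).val = (w.1 : Fin (2*k)).val := by rw [h]
    simp only [v0, w] at h1
    omega
  have heccw : ecc G w = 1 := by
    apply le_antisymm
    · apply Finset.sup_le
      intro u _
      by_cases hu : u = w
      · subst hu; simp [SimpleGraph.dist_self]
      · rw [hdist u hu]
    · calc 1 = G.dist w v0 := (hdist v0 hv0).symm
        _ ≤ _ := Finset.le_sup (Finset.mem_univ v0)
  have heccv : ∀ v : Σ i : Fin (2*k), Fin (α i), v ≠ w → 1 ≤ ecc G v := by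
    intro v hv
    calc 1 = G.dist v w := by rw [SimpleGraph.dist_comm]; exact (hdist v hv).symm
      _ ≤ _ := Finset.le_sup (Finset.mem_univ w)
  have hkey : ∀ v : Σ i : Fin (2*k), Fin (α i), v ≠ w →
      G.dist w v = min (ecc G w) (ecc G v) := by
    intro v hv
    rw [hdist v hv, heccw, min_eq_left (heccv v hv)]
  have headj : ∀ v : Σ i : Fin (2*k), Fin (α i), v ≠ w → (eccGraph G).Adj w v := by
    intro v hv
    exact ⟨Ne.symm hv, hkey v hv⟩
  have hreach : ∀ v : Σ i : Fin (2*k), Fin (α i), (eccGraph G).Reachable w v := by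
    intro v
    by_cases hv : v = w
    · subst hv; exact SimpleGraph.Reachable.refl _
    · exact (headj v hv).reachable
  constructor
  · haveI : Nonempty (Σ i : Fin (2*k), Fin (α i)) := ⟨w⟩
    exact ⟨fun u v => (hreach u).symm.trans (hreach v)⟩
  · rintro ⟨S, ⟨u, hu⟩, ⟨v, hv⟩, hzero⟩
    by_cases hw : w ∈ S
    · have hvw : v ≠ w := fun h => hv (h ▸ hw)
      have := hzero w hw v hv
      rw [eccMatrix, Matrix.of_apply, if_pos (hkey v hvw), hdist v hvw] at this
      norm_num at this
    · have huw : u ≠ w := fun h => hw (h ▸ hu)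
      have := hzero u hu w hw
      have hcond : G.dist u w = min (ecc G u) (ecc G w) := by
        rw [SimpleGraph.dist_comm, min_comm]; exact hkey u huw
      rw [eccMatrix, Matrix.of_apply, if_pos hcond, SimpleGraph.dist_comm,
        hdist u huw] at this
      norm_num at this
end

section
/- Let G = C(α₁,...,α_{2k}) with k ≥ 2 and α_{2k} ≥ 2. Then the eccentric graph G^e is disconnected, and hence the eccentricity matrix ε(G) is reducible. -/
open Finset Matrix

/-- If `G = C(α₁,…,α_{2k})` with `k ≥ 2` and `α_{2k} ≥ 2`, then the eccentric
graph `G^e` is disconnected, hence the eccentricity matrix `ε(G)` is reducible. -/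
theorem stmt2 (k : ℕ) (hk : 2 ≤ k) (α : Fin (2*k) → ℕ) (hα : ∀ i, 1 ≤ α i)
    (j : Fin (2*k)) (hj : j.val = 2*k - 1) (hlast : 2 ≤ α j) :
    ¬ (eccGraph (Cgraph (2*k) α)).Connected ∧
    ¬ MatIrreducible (eccMatrix (Cgraph (2*k) α)) := by
  set G := Cgraph (2*k) α with hG
  have adj_iff : ∀ u v : (Σ i : Fin (2*k), Fin (α i)),
      G.Adj u v ↔ (u ≠ v ∧ ((u.1 = v.1 ∧ Odd (2*k - 1 - u.1.val)) ∨
      (u.1 ≠ v.1 ∧ Even (2*k - 1 - max u.1.val v.1.val)))) := fun u v => Iff.rfl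
  -- every vertex in block j is adjacent to every vertex outside block j
  have hadjJ : ∀ u v : (Σ i : Fin (2*k), Fin (α i)), u.1 = j → v.1 ≠ j → G.Adj u v := by
    intro u v hu hv
    refine (adj_iff u v).mpr ⟨?_, Or.inr ⟨?_, ?_⟩⟩
    · intro h; exact hv (h ▸ hu)
    · rw [hu]; exact fun h => hv h.symm
    · have h1 : u.1.val = 2*k - 1 := by rw [hu, hj]
      have h2 : v.1.val < 2*k := v.1.isLt
      have : 2*k - 1 - max u.1.val v.1.val = 0 := by omega
      rw [this]; exact Even.zero
  -- no adjacency within block j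
  have hnadjJ : ∀ u v : (Σ i : Fin (2*k), Fin (α i)), u.1 = j → v.1 = j → ¬ G.Adj u v := by
    intro u v hu hv hadj
    rcases (adj_iff u v).mp hadj with ⟨hne, ⟨heq, hodd⟩ | ⟨hne1, _⟩⟩
    · have h1 : u.1.val = 2*k - 1 := by rw [hu, hj]
      rw [h1, Nat.sub_self] at hodd
      exact (Nat.not_odd_zero) hodd
    · exact hne1 (hu.trans hv.symm)
  -- some auxiliary vertices
  have h0lt : 0 < 2*k := by omega
  set b0 : Fin (2*k) := ⟨0, h0lt⟩ with hb0
  have hb0j : b0 ≠ j := by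
    intro h
    have := congrArg Fin.val h
    simp [hb0, hj] at this
    omega
  set w0 : (Σ i : Fin (2*k), Fin (α i)) := ⟨b0, ⟨0, hα b0⟩⟩ with hw0
  set vJ : (Σ i : Fin (2*k), Fin (α i)) := ⟨j, ⟨0, hα j⟩⟩ with hvJ
  -- distance 2 for distinct non-adjacent vertices
  have hdist2 : ∀ u v : (Σ i : Fin (2*k), Fin (α i)), u ≠ v → ¬ G.Adj u v →
      G.dist u v = 2 := by
    intro u v hne hnadj
    have hcn : ∃ w, G.Adj u w ∧ G.Adj w v := by
      by_cases hu : u.1 = j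
      · by_cases hv : v.1 = j
        · exact ⟨w0, hadjJ u w0 hu (by rw [hw0]; exact hb0j),
            (hadjJ v w0 hv (by rw [hw0]; exact hb0j)).symm⟩
        · exact absurd (hadjJ u v hu hv) hnadj
      · by_cases hv : v.1 = j
        · exact absurd ((hadjJ v u hv hu).symm) hnadj
        · exact ⟨vJ, (hadjJ vJ u rfl hu).symm, hadjJ vJ v rfl hv⟩
    obtain ⟨w, h1, h2⟩ := hcn
    have hle : G.dist u v ≤ 2 := by
      simpa using SimpleGraph.dist_le
        (SimpleGraph.Walk.cons h1 (SimpleGraph.Walk.cons h2 SimpleGraph.Walk.nil))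
    have hreach : G.Reachable u v :=
      (SimpleGraph.Walk.cons h1 (SimpleGraph.Walk.cons h2 SimpleGraph.Walk.nil)).reachable
    have hne0 : G.dist u v ≠ 0 := by
      intro h
      exact hne (hreach.dist_eq_zero_iff.mp h)
    have hne1 : G.dist u v ≠ 1 := by
      intro h
      exact hnadj (SimpleGraph.dist_eq_one_iff_adj.mp h)
    omega
  -- distances are at most 2
  have hdistle : ∀ u v : (Σ i : Fin (2*k), Fin (α i)), G.dist u v ≤ 2 := by
    intro u v
    by_cases hne : u = v
    · subst hne; simp [SimpleGraph.dist_self]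
    · by_cases hadj : G.Adj u v
      · rw [SimpleGraph.dist_eq_one_iff_adj.mpr hadj]; omega
      · rw [hdist2 u v hne hadj]
  -- every vertex has a non-neighbor
  have hnonnb : ∀ u : (Σ i : Fin (2*k), Fin (α i)), ∃ v, u ≠ v ∧ ¬ G.Adj u v := by
    rintro ⟨a, x⟩
    by_cases ha : a = j
    · have hlast' : 2 ≤ α a := by rw [ha]; exact hlast
      by_cases h : x.val = 0
      · refine ⟨⟨a, ⟨1, hlast'⟩⟩, ?_, hnadjJ _ _ ha ha⟩
        intro hcontr
        have hx : x = ⟨1, hlast'⟩ := eq_of_heq (Sigma.mk.inj_iff.mp hcontr).2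
        rw [hx] at h
        simp at h
      · refine ⟨⟨a, ⟨0, hα a⟩⟩, ?_, hnadjJ _ _ ha ha⟩
        intro hcontr
        have hx : x = ⟨0, hα a⟩ := eq_of_heq (Sigma.mk.inj_iff.mp hcontr).2
        exact h (by rw [hx])
    · -- a.val < 2*k - 1
      have haval : a.val < 2*k - 1 := by
        have h1 : a.val < 2*k := a.isLt
        have : a.val ≠ 2*k - 1 := fun h => ha (Fin.ext (h.trans hj.symm))
        omega
      rcases Nat.even_or_odd a.val with hev | hod
      · by_cases h0 : a.val = 0
        · -- use block 2
          have h2lt : 2 < 2*k := by omega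
          refine ⟨⟨⟨2, h2lt⟩, ⟨0, hα _⟩⟩, ?_, ?_⟩
          · intro h
            have := congrArg (fun z => (Sigma.fst z).val) h
            simp [h0] at this
          · intro hadj
            rcases (adj_iff _ _).mp hadj with ⟨_, ⟨heq, _⟩ | ⟨_, hevn⟩⟩
            · have := congrArg Fin.val heq; simp [h0] at this
            · simp only at hevn
              have hm : max a.val 2 = 2 := by omega
              rw [hm] at hevn
              rw [Nat.even_iff] at hevn
              omega
        · -- use block 0
          refine ⟨⟨b0, ⟨0, hα b0⟩⟩, ?_, ?_⟩
          · intro h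
            have := congrArg (fun z => (Sigma.fst z).val) h
            simp [hb0] at this
            exact h0 this
          · intro hadj
            rcases (adj_iff _ _).mp hadj with ⟨_, ⟨heq, _⟩ | ⟨_, hevn⟩⟩
            · have := congrArg Fin.val heq; simp [hb0] at this; exact h0 this
            · simp only [hb0] at hevn
              have hm : max a.val 0 = a.val := by omega
              rw [hm] at hevn
              rw [Nat.even_iff] at hevn
              rw [Nat.even_iff] at hev
              omega
      · -- a odd: use block a.val + 1
        have hlt : a.val + 1 < 2*k := by omega
        refine ⟨⟨⟨a.val + 1, hlt⟩, ⟨0, hα _⟩⟩, ?_, ?_⟩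
        · intro h
          have := congrArg (fun z => (Sigma.fst z).val) h
          simp at this
        · intro hadj
          rcases (adj_iff _ _).mp hadj with ⟨_, ⟨heq, _⟩ | ⟨_, hevn⟩⟩
          · have := congrArg Fin.val heq; simp at this
          · simp only at hevn
            have hm : max a.val (a.val + 1) = a.val + 1 := by omega
            rw [hm] at hevn
            rw [Nat.even_iff] at hevn
            rw [Nat.odd_iff] at hod
            omega
  -- all eccentricities equal 2
  have hecc : ∀ u : (Σ i : Fin (2*k), Fin (α i)), ecc G u = 2 := by
    intro u
    refine le_antisymm (Finset.sup_le fun v _ => hdistle u v) ?_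
    obtain ⟨v, hne, hnadj⟩ := hnonnb u
    calc 2 = G.dist u v := (hdist2 u v hne hnadj).symm
    _ ≤ _ := Finset.le_sup (Finset.mem_univ v)
  -- eccGraph adjacency
  have headj : ∀ u v : (Σ i : Fin (2*k), Fin (α i)),
      (eccGraph G).Adj u v ↔ u ≠ v ∧ G.dist u v = 2 := by
    intro u v
    show (u ≠ v ∧ G.dist u v = min (ecc G u) (ecc G v)) ↔ _
    rw [hecc u, hecc v, min_self]
  -- no eccGraph edges between block j and the rest
  have hcross : ∀ u v : (Σ i : Fin (2*k), Fin (α i)), u.1 = j → v.1 ≠ j →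
      ¬ (eccGraph G).Adj u v := by
    intro u v hu hv hadj
    have h2 := ((headj u v).mp hadj).2
    rw [SimpleGraph.dist_eq_one_iff_adj.mpr (hadjJ u v hu hv)] at h2
    omega
  constructor
  · intro hconn
    have key : ∀ {u v : (Σ i : Fin (2*k), Fin (α i))} (p : (eccGraph G).Walk u v),
        u.1 = j → v.1 = j := by
      intro u v p
      induction p with
      | nil => exact id
      | @cons a b c h q ih =>
        intro ha
        apply ih
        by_contra hb
        exact hcross a b ha hb h
    obtain ⟨p⟩ := hconn.preconnected vJ w0
    have := key p rfl
    rw [hw0] at this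
    exact hb0j this
  · intro hirr
    refine hirr ⟨{v | v.1 = j}, ⟨vJ, rfl⟩, ⟨w0, hb0j⟩, ?_⟩
    intro u hu v hv
    have hadj := hadjJ u v hu hv
    show (if G.dist u v = min (ecc G u) (ecc G v) then (G.dist u v : ℝ) else 0) = 0
    rw [SimpleGraph.dist_eq_one_iff_adj.mpr hadj, hecc u, hecc v, min_self]
    norm_num
end

section
/- Let G = C(α₁,...,α_{2k}) with k ≥ 2 and α_{2k} ≥ 2. Then 0 is an eigenvalue of ε(G) with multiplicity at least (α₁ + α₃ + ... + α_{2k-1}) - k. -/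
open Finset Matrix

/-- Geometric multiplicity of `μ` as an eigenvalue of `M`. -/
noncomputable def eigMult {n : Type*} [Fintype n] [DecidableEq n]
    (M : Matrix n n ℝ) (μ : ℝ) : ℕ :=
  Module.finrank ℝ (LinearMap.ker (Matrix.toLin' (M - μ • (1 : Matrix n n ℝ))))



section
variable {k : ℕ} {α : Fin (2*k) → ℕ}

lemma ne_of_fst_ne {u v : Σ i : Fin (2*k), Fin (α i)} (h : u.1.val ≠ v.1.val) : u ≠ v :=
  fun e => h (by rw [e])

lemma adj_iff (u v : Σ i : Fin (2*k), Fin (α i)) :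
    (Cgraph (2*k) α).Adj u v ↔ u ≠ v ∧ ((u.1 = v.1 ∧ (2*k - 1 - u.1.val) % 2 = 1) ∨
      (u.1 ≠ v.1 ∧ (2*k - 1 - max u.1.val v.1.val) % 2 = 0)) := by
  simp [Cgraph, Nat.odd_iff, Nat.even_iff]

lemma common_nbr (hk : 2 ≤ k) (hα : ∀ i, 1 ≤ α i)
    {u v : Σ i : Fin (2*k), Fin (α i)} (hne : u ≠ v)
    (hadj : ¬ (Cgraph (2*k) α).Adj u v) :
    ∃ w, (Cgraph (2*k) α).Adj u w ∧ (Cgraph (2*k) α).Adj w v := by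
  have hu2 := u.1.isLt
  have hv2 := v.1.isLt
  by_cases hu : u.1.val = 2*k-1 <;> by_cases hv : v.1.val = 2*k-1
  · -- both in the last block: use a vertex of block 0
    refine ⟨⟨⟨0, by omega⟩, ⟨0, by have := hα ⟨0, by omega⟩; omega⟩⟩, ?_, ?_⟩ <;>
      rw [adj_iff]
    · exact ⟨ne_of_fst_ne (by simp only [Fin.val_mk]; omega),
        Or.inr ⟨fun e => by simp only [Fin.ext_iff, Fin.val_mk] at e; omega,
        by simp only [Fin.val_mk]; omega⟩⟩
    · exact ⟨ne_of_fst_ne (by simp only [Fin.val_mk]; omega),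
        Or.inr ⟨fun e => by simp only [Fin.ext_iff, Fin.val_mk] at e; omega,
        by simp only [Fin.val_mk]; omega⟩⟩
  · exact absurd (by
      rw [adj_iff]
      exact ⟨hne, Or.inr ⟨fun e => by rw [Fin.ext_iff] at e; omega, by omega⟩⟩) hadj
  · exact absurd (by
      rw [adj_iff]
      exact ⟨hne, Or.inr ⟨fun e => by rw [Fin.ext_iff] at e; omega, by omega⟩⟩) hadj
  · -- both outside the last block: use a vertex of the last block
    refine ⟨⟨⟨2*k-1, by omega⟩, ⟨0, by have := hα ⟨2*k-1, by omega⟩; omega⟩⟩, ?_, ?_⟩ <;>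
      rw [adj_iff]
    · exact ⟨ne_of_fst_ne (by simp only [Fin.val_mk]; omega),
        Or.inr ⟨fun e => by simp only [Fin.ext_iff, Fin.val_mk] at e; omega,
        by simp only [Fin.val_mk]; omega⟩⟩
    · exact ⟨ne_of_fst_ne (by simp only [Fin.val_mk]; omega),
        Or.inr ⟨fun e => by simp only [Fin.ext_iff, Fin.val_mk] at e; omega,
        by simp only [Fin.val_mk]; omega⟩⟩

lemma dist_eq_two (hk : 2 ≤ k) (hα : ∀ i, 1 ≤ α i)
    {u v : Σ i : Fin (2*k), Fin (α i)} (hne : u ≠ v)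
    (hadj : ¬ (Cgraph (2*k) α).Adj u v) :
    (Cgraph (2*k) α).dist u v = 2 := by
  obtain ⟨w, h1, h2⟩ := common_nbr hk hα hne hadj
  have hw : (Cgraph (2*k) α).Walk u v := (h1.toWalk.append h2.toWalk)
  have hle : (Cgraph (2*k) α).dist u v ≤ 2 := by
    simpa using SimpleGraph.dist_le (h1.toWalk.append h2.toWalk)
  have h0 : (Cgraph (2*k) α).dist u v ≠ 0 := by
    intro h
    exact hne ((SimpleGraph.Reachable.dist_eq_zero_iff ⟨hw⟩).mp h)
  have h1' : (Cgraph (2*k) α).dist u v ≠ 1 := fun h =>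
    hadj (SimpleGraph.dist_eq_one_iff_adj.mp h)
  omega

lemma dist_le_two (hk : 2 ≤ k) (hα : ∀ i, 1 ≤ α i)
    (u v : Σ i : Fin (2*k), Fin (α i)) :
    (Cgraph (2*k) α).dist u v ≤ 2 := by
  by_cases h : u = v
  · subst h; rw [SimpleGraph.dist_self]; omega
  by_cases h2 : (Cgraph (2*k) α).Adj u v
  · rw [SimpleGraph.dist_eq_one_iff_adj.mpr h2]; omega
  · rw [dist_eq_two hk hα h h2]

lemma far_witness (hk : 2 ≤ k) (hα : ∀ i, 1 ≤ α i)
    (j : Fin (2*k)) (hj : j.val = 2*k - 1) (hlast : 2 ≤ α j)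
    (u : Σ i : Fin (2*k), Fin (α i)) :
    ∃ v, u ≠ v ∧ ¬ (Cgraph (2*k) α).Adj u v := by
  obtain ⟨i, x⟩ := u
  have hu2 := i.isLt
  by_cases h : i.val = 2*k-1
  · -- another vertex in the last block
    have hu1 : i = j := Fin.ext (by omega)
    have h2 : 2 ≤ α i := by rw [hu1]; exact hlast
    refine ⟨⟨i, if x.val = 0 then ⟨1, by omega⟩ else ⟨0, by omega⟩⟩, ?_, ?_⟩
    · intro e
      rw [Sigma.mk.inj_iff, heq_eq_eq, Fin.ext_iff] at e
      have e2 := e.2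
      split at e2 <;> simp_all
    · rw [adj_iff]
      rintro ⟨-, (⟨-, hodd⟩ | ⟨hne', -⟩)⟩
      · simp only [Fin.val_mk] at hodd; omega
      · exact hne' rfl
  · -- a vertex in another block with even max
    set b : ℕ := if i.val % 2 = 0 then (if i.val = 0 then 2 else 0) else i.val + 1
      with hb
    have hk4 : 4 ≤ 2*k := by omega
    have hblt : b < 2*k := by rw [hb]; split <;> [skip; omega]; split <;> omega
    have hbne : b ≠ i.val := by rw [hb]; split <;> [skip; omega]; split <;> omega
    have hbmax : max i.val b % 2 = 0 := by rw [hb]; split <;> [skip; omega]; split <;> omega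
    refine ⟨⟨⟨b, hblt⟩, ⟨0, hα _⟩⟩, ne_of_fst_ne (by simpa using hbne.symm), ?_⟩
    rw [adj_iff]
    rintro ⟨-, (⟨heq, -⟩ | ⟨-, hev⟩)⟩
    · rw [Fin.ext_iff] at heq; simp only [Fin.val_mk] at heq; omega
    · simp only [Fin.val_mk] at hev
      omega

lemma ecc_eq_two (hk : 2 ≤ k) (hα : ∀ i, 1 ≤ α i)
    (j : Fin (2*k)) (hj : j.val = 2*k - 1) (hlast : 2 ≤ α j)
    (u : Σ i : Fin (2*k), Fin (α i)) :
    ecc (Cgraph (2*k) α) u = 2 := by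
  apply le_antisymm
  · exact Finset.sup_le fun v _ => dist_le_two hk hα u v
  · obtain ⟨v, hne, hadj⟩ := far_witness hk hα j hj hlast u
    calc (2:ℕ) = (Cgraph (2*k) α).dist u v := (dist_eq_two hk hα hne hadj).symm
      _ ≤ _ := Finset.le_sup (Finset.mem_univ v)
end


section
variable {k : ℕ} {α : Fin (2*k) → ℕ}

lemma eps_self (u : Σ i : Fin (2*k), Fin (α i)) :
    eccMatrix (Cgraph (2*k) α) u u = 0 := by
  unfold eccMatrix
  rw [Matrix.of_apply, SimpleGraph.dist_self]
  simp

lemma eps_of_adj (hk : 2 ≤ k) (hα : ∀ i, 1 ≤ α i)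
    (j : Fin (2*k)) (hj : j.val = 2*k - 1) (hlast : 2 ≤ α j)
    {u v : Σ i : Fin (2*k), Fin (α i)} (h : (Cgraph (2*k) α).Adj u v) :
    eccMatrix (Cgraph (2*k) α) u v = 0 := by
  unfold eccMatrix ecc
  rw [Matrix.of_apply, SimpleGraph.dist_eq_one_iff_adj.mpr h,
    show (Finset.univ.sup fun w => (Cgraph (2*k) α).dist u w) = 2 from
      ecc_eq_two hk hα j hj hlast u,
    show (Finset.univ.sup fun w => (Cgraph (2*k) α).dist v w) = 2 from
      ecc_eq_two hk hα j hj hlast v, min_self]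
  norm_num

lemma eps_of_far (hk : 2 ≤ k) (hα : ∀ i, 1 ≤ α i)
    (j : Fin (2*k)) (hj : j.val = 2*k - 1) (hlast : 2 ≤ α j)
    {u v : Σ i : Fin (2*k), Fin (α i)} (hne : u ≠ v)
    (hadj : ¬ (Cgraph (2*k) α).Adj u v) :
    eccMatrix (Cgraph (2*k) α) u v = 2 := by
  unfold eccMatrix ecc
  rw [Matrix.of_apply, dist_eq_two hk hα hne hadj,
    show (Finset.univ.sup fun w => (Cgraph (2*k) α).dist u w) = 2 from
      ecc_eq_two hk hα j hj hlast u,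
    show (Finset.univ.sup fun w => (Cgraph (2*k) α).dist v w) = 2 from
      ecc_eq_two hk hα j hj hlast v, min_self]
  norm_num

lemma col_eq (hk : 2 ≤ k) (hα : ∀ i, 1 ≤ α i)
    (j : Fin (2*k)) (hj : j.val = 2*k - 1) (hlast : 2 ≤ α j)
    (i : Fin (2*k)) (hi : i.val % 2 = 0) (a b : Fin (α i))
    (u : Σ i : Fin (2*k), Fin (α i)) :
    eccMatrix (Cgraph (2*k) α) u ⟨i, a⟩ = eccMatrix (Cgraph (2*k) α) u ⟨i, b⟩ := by
  have hilt := i.isLt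
  by_cases hf : u.1 = i
  · have hzero : ∀ c : Fin (α i), eccMatrix (Cgraph (2*k) α) u ⟨i, c⟩ = 0 := by
      intro c
      by_cases he : u = ⟨i, c⟩
      · rw [he]; exact eps_self _
      · apply eps_of_adj hk hα j hj hlast
        rw [adj_iff]
        refine ⟨he, Or.inl ⟨hf, ?_⟩⟩
        have h3 : u.1.val = i.val := by rw [hf]
        omega
    rw [hzero a, hzero b]
  · by_cases hev : (2*k - 1 - max u.1.val i.val) % 2 = 0
    · have hadj : ∀ c : Fin (α i), (Cgraph (2*k) α).Adj u ⟨i, c⟩ := fun c => by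
        rw [adj_iff]
        exact ⟨ne_of_fst_ne (fun e => hf (Fin.ext e)), Or.inr ⟨hf, hev⟩⟩
      rw [eps_of_adj hk hα j hj hlast (hadj a), eps_of_adj hk hα j hj hlast (hadj b)]
    · have hfar : ∀ c : Fin (α i), ¬ (Cgraph (2*k) α).Adj u ⟨i, c⟩ := fun c h => by
        rw [adj_iff] at h
        rcases h.2 with ⟨he, -⟩ | ⟨-, h2⟩
        exacts [hf he, hev h2]
      rw [eps_of_far hk hα j hj hlast (ne_of_fst_ne fun e => hf (Fin.ext e)) (hfar a),
          eps_of_far hk hα j hj hlast (ne_of_fst_ne fun e => hf (Fin.ext e)) (hfar b)]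
end

section
variable (k : ℕ) (α : Fin (2*k) → ℕ)

/-- Index type for the kernel vectors. -/
abbrev Tidx := Σ i : {i : Fin (2*k) // i.val % 2 = 0}, Fin (α i.1 - 1)

def embT : Tidx k α → Σ i : Fin (2*k), Fin (α i) :=
  fun t => ⟨t.1.1, ⟨t.2.val + 1, by have := t.2.isLt; omega⟩⟩

def bseT (hα : ∀ i, 1 ≤ α i) : Tidx k α → Σ i : Fin (2*k), Fin (α i) :=
  fun t => ⟨t.1.1, ⟨0, hα t.1.1⟩⟩

lemma embT_inj : Function.Injective (embT k α) := by
  rintro ⟨i1, a⟩ ⟨i2, a'⟩ h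
  have hF := congrArg (fun v : Σ i : Fin (2*k), Fin (α i) => (v.1.val, v.2.val)) h
  unfold embT at hF
  simp only [Prod.mk.injEq] at hF
  obtain ⟨h1, h2⟩ := hF
  have hi : i1 = i2 := Subtype.ext (Fin.ext h1)
  subst hi
  have : a = a' := Fin.ext (by omega)
  subst this; rfl

lemma bse_ne_emb (hα : ∀ i, 1 ≤ α i) (t t' : Tidx k α) :
    bseT k α hα t' ≠ embT k α t := by
  intro h
  have hF := congrArg (fun v : Σ i : Fin (2*k), Fin (α i) => v.2.val) h
  unfold bseT embT at hF
  simp at hF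

variable {k α} in
lemma col_eq' (hk : 2 ≤ k) (hα : ∀ i, 1 ≤ α i)
    (j : Fin (2*k)) (hj : j.val = 2*k - 1) (hlast : 2 ≤ α j)
    (t : Tidx k α) (u : Σ i : Fin (2*k), Fin (α i)) :
    eccMatrix (Cgraph (2*k) α) u (embT k α t) =
      eccMatrix (Cgraph (2*k) α) u (bseT k α hα t) := by
  unfold embT bseT
  exact col_eq hk hα j hj hlast t.1.1 t.1.2 _ _ u

end

set_option maxHeartbeats 2000000 in
/-- For `G = C(α₁,…,α_{2k})` with `k ≥ 2`, `α_{2k} ≥ 2`, `0` is an eigenvalue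
of `ε(G)` with multiplicity at least `α₁ + α₃ + ⋯ + α_{2k-1} - k` (odd-indexed
blocks of the paper are the 0-based even indices here). -/
theorem stmt5 (k : ℕ) (hk : 2 ≤ k) (α : Fin (2*k) → ℕ) (hα : ∀ i, 1 ≤ α i)
    (j : Fin (2*k)) (hj : j.val = 2*k - 1) (hlast : 2 ≤ α j) :
    (∑ i ∈ Finset.univ.filter (fun i : Fin (2*k) => i.val % 2 = 0), α i) - k ≤
      eigMult (eccMatrix (Cgraph (2*k) α)) 0 := by
  classical
  unfold eigMult
  rw [zero_smul, sub_zero]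
  set K := LinearMap.ker (Matrix.toLin' (eccMatrix (Cgraph (2*k) α))) with hK
  have hmem : ∀ t : Tidx k α,
      (Pi.single (embT k α t) (1:ℝ) - Pi.single (bseT k α hα t) 1) ∈ K := by
    intro t
    rw [hK, LinearMap.mem_ker, Matrix.toLin'_apply]
    ext u
    rw [Matrix.mulVec_sub]
    simp only [Matrix.mulVec_single, Pi.sub_apply, mul_one, Pi.zero_apply]
    rw [sub_eq_zero]
    rw [MulOpposite.op_one, one_smul, one_smul]
    exact col_eq' hk hα j hj hlast t u
  have hLI : LinearIndependent ℝ
      (fun t : Tidx k α => (Pi.single (embT k α t) 1 - Pi.single (bseT k α hα t) 1 :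
        (Σ i : Fin (2*k), Fin (α i)) → ℝ)) := by
    rw [Fintype.linearIndependent_iff]
    intro g hg t
    have h := congrFun hg (embT k α t)
    simp only [Finset.sum_apply, Pi.smul_apply, Pi.sub_apply, Pi.zero_apply, smul_eq_mul,
      Pi.single_apply] at h
    rw [Finset.sum_eq_single t (fun t' _ hne => by
        rw [if_neg (fun e => hne ((embT_inj k α) e).symm),
          if_neg (fun e => bse_ne_emb k α hα t t' e.symm)]
        ring) (fun h' => absurd (Finset.mem_univ t) h')] at h
    rw [if_pos rfl, if_neg (fun e => bse_ne_emb k α hα t t e.symm)] at h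
    simpa using h
  let fk : Tidx k α → K := fun t =>
    ⟨Pi.single (embT k α t) (1:ℝ) - Pi.single (bseT k α hα t) 1, hmem t⟩
  have hLI2 : LinearIndependent ℝ fk := hLI.of_comp K.subtype
  have hcard := hLI2.fintype_card_le_finrank
  have hcardT : Fintype.card (Tidx k α) =
      ∑ i ∈ Finset.univ.filter (fun i : Fin (2*k) => i.val % 2 = 0), (α i - 1) := by
    rw [Fintype.card_sigma]
    simp only [Fintype.card_fin, Fintype.card_coe]
    rw [← Finset.sum_subtype (p := fun i : Fin (2*k) => i.val % 2 = 0)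
      (Finset.univ.filter (fun i : Fin (2*k) => i.val % 2 = 0)) (by simp)
      (fun i => α i - 1)]
  have hfk : (Finset.univ.filter (fun i : Fin (2*k) => i.val % 2 = 0)).card ≤ k := by
    have h2 := Finset.card_le_card_of_injOn
      (s := Finset.univ.filter (fun i : Fin (2*k) => i.val % 2 = 0))
      (f := fun i : Fin (2*k) => (⟨i.val / 2, by have := i.isLt; omega⟩ : Fin k))
      (t := Finset.univ) (fun x _ => Finset.mem_univ _) ?_
    · simpa using h2
    · intro x hx y hy hxy
      simp only [Finset.coe_filter, Set.mem_setOf_eq] at hx hy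
      rw [Fin.mk.injEq] at hxy
      exact Fin.ext (by have := x.isLt; have := y.isLt; omega)
  have hsum : ∑ i ∈ Finset.univ.filter (fun i : Fin (2*k) => i.val % 2 = 0), α i =
      (∑ i ∈ Finset.univ.filter (fun i : Fin (2*k) => i.val % 2 = 0), (α i - 1)) +
        (Finset.univ.filter (fun i : Fin (2*k) => i.val % 2 = 0)).card := by
    rw [Finset.card_eq_sum_ones, ← Finset.sum_add_distrib]
    exact Finset.sum_congr rfl (fun i _ => by have := hα i; omega)
  omega
end

section
/- Let G = C(α₁,...,α_{2k}) with k ≥ 2 and α_{2k} ≥ 2. Then 2(α_{2k} - 1) is an eigenvalue of ε(G), with eigenvector equal to the indicator vector of the last block V_{2k}. -/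
open Finset Matrix

section Aux
variable {k : ℕ} {α : Fin (2*k) → ℕ} {j : Fin (2*k)}

lemma adj_last (hj : j.val = 2*k - 1) (u v : Σ i : Fin (2*k), Fin (α i))
    (hu : u.1 = j) (hv : v.1 ≠ j) : (Cgraph (2*k) α).Adj u v := by
  have hne1 : u.1 ≠ v.1 := fun h => hv (h ▸ hu)
  refine ⟨fun h => hne1 (congrArg Sigma.fst h), Or.inr ⟨hne1, ?_⟩⟩
  have h1 : u.1.val = 2*k - 1 := hu ▸ hj
  have h2 : v.1.val < 2*k := v.1.isLt
  have : max u.1.val v.1.val = 2*k - 1 := by omega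
  rw [this]
  simp

lemma nadj_same (hj : j.val = 2*k - 1) (u v : Σ i : Fin (2*k), Fin (α i))
    (hu : u.1 = j) (hv : v.1 = j) : ¬ (Cgraph (2*k) α).Adj u v := by
  rintro ⟨hne, ⟨-, hodd⟩ | ⟨hne', -⟩⟩
  · have h1 : u.1.val = 2*k - 1 := hu ▸ hj
    rw [h1, Nat.sub_self] at hodd
    simp [Nat.odd_iff] at hodd
  · exact hne' (hu.trans hv.symm)

lemma dist_cross (hj : j.val = 2*k - 1) (u v : Σ i : Fin (2*k), Fin (α i))
    (hu : u.1 = j) (hv : v.1 ≠ j) : (Cgraph (2*k) α).dist u v = 1 :=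
  SimpleGraph.dist_eq_one_iff_adj.mpr (adj_last hj u v hu hv)

lemma dist_same (hk : 2 ≤ k) (hα : ∀ i, 1 ≤ α i) (hj : j.val = 2*k - 1)
    (u v : Σ i : Fin (2*k), Fin (α i)) (hu : u.1 = j) (hv : v.1 = j)
    (huv : u ≠ v) : (Cgraph (2*k) α).dist u v = 2 := by
  have hk4 : 4 ≤ 2*k := by omega
  set i0 : Fin (2*k) := ⟨0, by omega⟩ with hi0
  have hi0j : i0 ≠ j := by
    intro h
    have := congrArg Fin.val h
    rw [hi0, hj] at this
    simp at this
    omega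
  set p : Σ i : Fin (2*k), Fin (α i) := ⟨i0, ⟨0, hα i0⟩⟩ with hp
  have h1 : (Cgraph (2*k) α).Adj u p := adj_last hj u p hu hi0j
  have h2 : (Cgraph (2*k) α).Adj p v := ((adj_last hj v p hv hi0j)).symm
  have hle : (Cgraph (2*k) α).dist u v ≤ 2 := by
    have := SimpleGraph.dist_le (SimpleGraph.Walk.cons h1 h2.toWalk)
    simpa using this
  have hr : (Cgraph (2*k) α).Reachable u v := ⟨SimpleGraph.Walk.cons h1 h2.toWalk⟩
  have h0 : (Cgraph (2*k) α).dist u v ≠ 0 := fun h => huv (hr.dist_eq_zero_iff.mp h)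
  have h1' : (Cgraph (2*k) α).dist u v ≠ 1 := fun h =>
    nadj_same hj u v hu hv (SimpleGraph.dist_eq_one_iff_adj.mp h)
  omega

lemma ecc_last (hk : 2 ≤ k) (hα : ∀ i, 1 ≤ α i) (hj : j.val = 2*k - 1)
    (u : Σ i : Fin (2*k), Fin (α i)) (hu : u.1 = j) (hlast : 2 ≤ α j) :
    ecc (Cgraph (2*k) α) u = 2 := by
  apply le_antisymm
  · apply Finset.sup_le
    intro v _
    by_cases hv : v.1 = j
    · by_cases huv : u = v
      · rw [← huv, SimpleGraph.dist_self]; omega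
      · rw [dist_same hk hα hj _ _ hu hv huv]
    · rw [dist_cross hj _ _ hu hv]; omega
  · obtain ⟨a, s⟩ := u
    have ha : a = j := hu
    subst ha
    have hs1 : s.val < α a := s.isLt
    set t : Fin (α a) := ⟨if s.val = 0 then 1 else 0, by split <;> omega⟩ with ht
    have hts : s ≠ t := by
      intro h
      have := congrArg Fin.val h
      rw [ht] at this
      simp at this
      split at this <;> omega
    have hne : (⟨a, s⟩ : Σ i : Fin (2*k), Fin (α i)) ≠ ⟨a, t⟩ := by
      intro h
      simp at h
      exact hts h
    have hd := dist_same hk hα hj (⟨a, s⟩ : Σ i : Fin (2*k), Fin (α i)) ⟨a, t⟩ hu hu hne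
    calc 2 = (Cgraph (2*k) α).dist ⟨a, s⟩ ⟨a, t⟩ := hd.symm
    _ ≤ _ := Finset.le_sup (Finset.mem_univ _)

lemma ecc_ge2 (hk : 2 ≤ k) (hα : ∀ i, 1 ≤ α i) (hj : j.val = 2*k - 1)
    (hlast : 2 ≤ α j) (u : Σ i : Fin (2*k), Fin (α i)) :
    2 ≤ ecc (Cgraph (2*k) α) u := by
  by_cases hu : u.1 = j
  · exact (ecc_last hk hα hj u hu hlast).ge
  · have hua : u.1.val < 2*k - 1 := by
      have := u.1.isLt
      have : u.1.val ≠ 2*k - 1 := fun h => hu (Fin.ext (h.trans hj.symm))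
      omega
    set b : Fin (2*k) := ⟨if u.1.val = 2*k-2 then 0 else 2*k-2, by split <;> omega⟩ with hb
    have hbj : b ≠ j := by
      intro h
      have := congrArg Fin.val h
      rw [hb, hj] at this
      simp at this
      split at this <;> omega
    have hbu : b ≠ u.1 := by
      intro h
      have := congrArg Fin.val h
      rw [hb] at this
      simp at this
      split at this <;> omega
    set w : Σ i : Fin (2*k), Fin (α i) := ⟨b, ⟨0, hα b⟩⟩ with hw
    have hmax : max u.1.val w.1.val = 2*k - 2 := by
      rw [hw, hb]
      simp
      split <;> omega
    have hnadj : ¬ (Cgraph (2*k) α).Adj u w := by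
      rintro ⟨-, ⟨he, -⟩ | ⟨-, hev⟩⟩
      · exact hbu (he.symm)
      · rw [hmax] at hev
        have : 2*k - 1 - (2*k - 2) = 1 := by omega
        rw [this] at hev
        simp [Nat.even_iff] at hev
    set p : Σ i : Fin (2*k), Fin (α i) := ⟨j, ⟨0, by omega⟩⟩ with hp
    have h1 : (Cgraph (2*k) α).Adj u p := (adj_last hj p u rfl hu).symm
    have h2 : (Cgraph (2*k) α).Adj p w := adj_last hj p w rfl hbj
    have hr : (Cgraph (2*k) α).Reachable u w := ⟨SimpleGraph.Walk.cons h1 h2.toWalk⟩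
    have h0 : (Cgraph (2*k) α).dist u w ≠ 0 := fun h => by
      have := hr.dist_eq_zero_iff.mp h
      exact hbu (congrArg Sigma.fst this).symm
    have h1' : (Cgraph (2*k) α).dist u w ≠ 1 := fun h =>
      hnadj (SimpleGraph.dist_eq_one_iff_adj.mp h)
    calc 2 ≤ (Cgraph (2*k) α).dist u w := by omega
    _ ≤ _ := Finset.le_sup (Finset.mem_univ _)

end Aux

section Aux2
variable {k : ℕ} {α : Fin (2*k) → ℕ} {j : Fin (2*k)}

lemma entry_same (hk : 2 ≤ k) (hα : ∀ i, 1 ≤ α i) (hj : j.val = 2*k - 1)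
    (hlast : 2 ≤ α j) (s t : Fin (α j)) :
    eccMatrix (Cgraph (2*k) α) ⟨j, s⟩ ⟨j, t⟩ = if t = s then 0 else 2 := by
  have he1 : ecc (Cgraph (2*k) α) (⟨j, s⟩ : Σ i : Fin (2*k), Fin (α i)) = 2 :=
    ecc_last hk hα hj _ rfl hlast
  have he2 : ecc (Cgraph (2*k) α) (⟨j, t⟩ : Σ i : Fin (2*k), Fin (α i)) = 2 :=
    ecc_last hk hα hj _ rfl hlast
  rw [eccMatrix, Matrix.of_apply, he1, he2]
  by_cases hts : t = s
  · subst hts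
    rw [SimpleGraph.dist_self]
    simp
  · have hne : (⟨j, s⟩ : Σ i : Fin (2*k), Fin (α i)) ≠ ⟨j, t⟩ := by
      intro h
      simp at h
      exact hts h.symm
    rw [dist_same hk hα hj _ _ rfl rfl hne]
    simp [hts]

lemma entry_cross (hk : 2 ≤ k) (hα : ∀ i, 1 ≤ α i) (hj : j.val = 2*k - 1)
    (hlast : 2 ≤ α j) (u : Σ i : Fin (2*k), Fin (α i)) (hu : u.1 ≠ j)
    (t : Fin (α j)) :
    eccMatrix (Cgraph (2*k) α) u ⟨j, t⟩ = 0 := by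
  have hd : (Cgraph (2*k) α).dist u ⟨j, t⟩ = 1 := by
    rw [SimpleGraph.dist_comm]
    exact dist_cross hj _ _ rfl hu
  have h1 : 2 ≤ ecc (Cgraph (2*k) α) u := ecc_ge2 hk hα hj hlast u
  have h2 : 2 ≤ ecc (Cgraph (2*k) α) (⟨j, t⟩ : Σ i : Fin (2*k), Fin (α i)) :=
    ecc_ge2 hk hα hj hlast _
  rw [eccMatrix, Matrix.of_apply, hd, if_neg]
  omega

end Aux2

/-- For `G = C(α₁,…,α_{2k})` with `k ≥ 2`, `α_{2k} ≥ 2`, the indicator vector of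
the last block `V_{2k}` is an eigenvector of `ε(G)` for the eigenvalue
`2(α_{2k} - 1)`; in particular `2(α_{2k}-1)` is an eigenvalue of `ε(G)`. -/
theorem stmt6 (k : ℕ) (hk : 2 ≤ k) (α : Fin (2*k) → ℕ) (hα : ∀ i, 1 ≤ α i)
    (j : Fin (2*k)) (hj : j.val = 2*k - 1) (hlast : 2 ≤ α j) :
    (eccMatrix (Cgraph (2*k) α)).mulVec
        (fun v : Σ i : Fin (2*k), Fin (α i) => if v.1 = j then (1 : ℝ) else 0) =
      ((2 * (α j - 1) : ℕ) : ℝ) •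
        (fun v : Σ i : Fin (2*k), Fin (α i) => if v.1 = j then (1 : ℝ) else 0) ∧
    (fun v : Σ i : Fin (2*k), Fin (α i) => if v.1 = j then (1 : ℝ) else 0) ≠ 0 := by
  constructor
  · funext u
    have hcast : ((2 * (α j - 1) : ℕ) : ℝ) = 2 * (α j : ℝ) - 2 := by
      have h1 : 1 ≤ α j := hα j
      push_cast [Nat.cast_sub h1]
      ring
    have hsum : (eccMatrix (Cgraph (2*k) α)).mulVec
        (fun v : Σ i : Fin (2*k), Fin (α i) => if v.1 = j then (1 : ℝ) else 0) u
        = ∑ t : Fin (α j), eccMatrix (Cgraph (2*k) α) u ⟨j, t⟩ := by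
      rw [Matrix.mulVec, dotProduct]
      rw [← Finset.univ_sigma_univ, Finset.sum_sigma]
      have : ∀ i : Fin (2*k), ∑ t : Fin (α i),
          eccMatrix (Cgraph (2*k) α) u ⟨i, t⟩ *
            (if (⟨i, t⟩ : Σ i : Fin (2*k), Fin (α i)).1 = j then (1:ℝ) else 0)
          = if i = j then ∑ t : Fin (α i), eccMatrix (Cgraph (2*k) α) u ⟨i, t⟩ else 0 := by
        intro i
        by_cases h : i = j <;> simp [h]
      rw [Finset.sum_congr rfl fun i _ => this i, Finset.sum_ite_eq' Finset.univ j]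
      simp
    rw [hsum]
    by_cases hu : u.1 = j
    · obtain ⟨a, s⟩ := u
      have ha : a = j := hu
      subst ha
      have : ∀ t : Fin (α a), eccMatrix (Cgraph (2*k) α) ⟨a, s⟩ ⟨a, t⟩
          = if t = s then 0 else 2 := entry_same hk hα hj hlast s
      rw [Finset.sum_congr rfl fun t _ => this t]
      have : ∀ t : Fin (α a), (if t = s then (0:ℝ) else 2)
          = 2 - (if t = s then 2 else 0) := by intro t; split <;> ring
      rw [Finset.sum_congr rfl fun t _ => this t, Finset.sum_sub_distrib,
        Finset.sum_const, Finset.sum_ite_eq' Finset.univ s]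
      simp [hcast, hu]
      ring
    · have : ∀ t : Fin (α j), eccMatrix (Cgraph (2*k) α) u ⟨j, t⟩ = 0 :=
        entry_cross hk hα hj hlast u hu
      rw [Finset.sum_congr rfl fun t _ => this t]
      simp [hu]
  · intro h
    have := congrFun h ⟨j, ⟨0, by omega⟩⟩
    simp at this
end

section
/- Let G = C(α₁,...,α_{2k}) with k ≥ 2 and α_{2k} ≥ 2, and let Q̃ be the (2k-1)×(2k-1) quotient matrix of ε(G). Then 0 is an eigenvalue of Q̃ if and only if α₂ = 1, and when α₂ = 1 it is a simple eigenvalue (rank Q̃ = 2k - 2). -/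
open Finset Matrix

/-- The quotient matrix `Q̃` of the eccentricity matrix of `C(α₁,…,α_{2k})`
with respect to the first `2k-1` blocks (indices here are 0-based; the paper's
row/column `r` is `r-1` here, so paper-odd rows correspond to even `i`). -/
noncomputable def Qtilde (k : ℕ) (α : Fin (2*k) → ℕ) :
    Matrix (Fin (2*k-1)) (Fin (2*k-1)) ℝ :=
  Matrix.of fun i j =>
    let a : Fin (2*k-1) → ℝ := fun m => (α (Fin.castLE (by omega) m) : ℝ)
    if i.val % 2 = 0 then
      if j.val % 2 = 0 then (if i = j then 0 else 2 * a j)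
      else (if j.val < i.val then 2 * a j else 0)
    else
      if i = j then 2 * (a i - 1)
      else if j.val % 2 = 0 ∧ i.val < j.val then 2 * a j else 0

private noncomputable def aa (k : ℕ) (α : Fin (2*k) → ℕ) (m : ℕ) : ℝ :=
  if h : m < 2*k then (α ⟨m, h⟩ : ℝ) else 1

private noncomputable def xx (k : ℕ) (x : Fin (2*k-1) → ℝ) (m : ℕ) : ℝ :=
  if h : m < 2*k-1 then x ⟨m, h⟩ else 0

private noncomputable def ent (k : ℕ) (α : Fin (2*k) → ℕ) (i j : ℕ) : ℝ :=
  if i % 2 = 0 then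
    if j % 2 = 0 then (if i = j then 0 else 2 * aa k α j)
    else (if j < i then 2 * aa k α j else 0)
  else
    if i = j then 2 * (aa k α i - 1)
    else if j % 2 = 0 ∧ i < j then 2 * aa k α j else 0

private noncomputable def uu (k : ℕ) (α : Fin (2*k) → ℕ) (X : ℕ → ℝ) (m : ℕ) : ℝ :=
  aa k α (2*m) * X (2*m)

private noncomputable def vv (k : ℕ) (α : Fin (2*k) → ℕ) (X : ℕ → ℝ) (m : ℕ) : ℝ :=
  aa k α (2*m+1) * X (2*m+1)

private noncomputable def tt (k : ℕ) (α : Fin (2*k) → ℕ) (X : ℕ → ℝ) (m : ℕ) : ℝ :=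
  ∑ i ∈ range m, (uu k α X i + vv k α X i)

private lemma aa_one_le (k : ℕ) (α : Fin (2*k) → ℕ) (hα : ∀ i, 1 ≤ α i) (m : ℕ) :
    1 ≤ aa k α m := by
  unfold aa
  split
  · exact_mod_cast hα _
  · exact le_refl 1

private lemma sum_range_parity (f : ℕ → ℝ) (K : ℕ) :
    ∑ j ∈ range (2*K+1), f j = (∑ i ∈ range (K+1), f (2*i)) + ∑ i ∈ range K, f (2*i+1) := by
  induction K with
  | zero => simp
  | succ n ih =>
    have h : 2*(n+1)+1 = (2*n+1) + 1 + 1 := by ring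
    rw [h, sum_range_succ, sum_range_succ, ih, sum_range_succ (fun i => f (2*i)) (n+1),
        sum_range_succ (fun i => f (2*i+1)) n]
    have e1 : 2*(n+1) = 2*n+1+1 := by ring
    rw [e1]; ring

private lemma hrow (k : ℕ) (hk : 2 ≤ k) (α : Fin (2*k) → ℕ) (x : Fin (2*k-1) → ℝ)
    (hx : (Qtilde k α).mulVec x = 0) (i : ℕ) (hi : i < 2*k-1) :
    ∑ j ∈ range (2*k-1), ent k α i j * xx k x j = 0 := by
  have h0 := congrFun hx ⟨i, hi⟩
  rw [Pi.zero_apply, Matrix.mulVec, dotProduct] at h0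
  calc ∑ j ∈ range (2*k-1), ent k α i j * xx k x j
      = ∑ j : Fin (2*k-1), ent k α i j.val * xx k x j.val :=
        (Fin.sum_univ_eq_sum_range _ _).symm
    _ = ∑ j : Fin (2*k-1), Qtilde k α ⟨i, hi⟩ j * x j := by
        apply sum_congr rfl
        rintro ⟨jv, hjv⟩ _
        have hjk : jv < 2*k := by omega
        have hik : i < 2*k := by omega
        simp only [ent, aa, xx, Qtilde, Matrix.of_apply, Fin.mk.injEq, Fin.castLE_mk,
          dif_pos hjv, dif_pos hjk, dif_pos hik]
    _ = 0 := h0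

private lemma hErow (k : ℕ) (hk : 2 ≤ k) (α : Fin (2*k) → ℕ) (X : ℕ → ℝ)
    (m : ℕ) (hm : m < k)
    (h : ∑ j ∈ range (2*k-1), ent k α (2*m) j * X j = 0) :
    (∑ i ∈ range k, uu k α X i) - uu k α X m + ∑ i ∈ range m, vv k α X i = 0 := by
  rw [show 2*k-1 = 2*(k-1)+1 by omega, sum_range_parity, show (k-1)+1 = k by omega] at h
  have heven : ∀ i' ∈ range k, ent k α (2*m) (2*i') * X (2*i')
      = 2 * uu k α X i' - (if i' = m then 2 * uu k α X i' else 0) := by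
    intro i' _
    by_cases h' : i' = m
    · subst h'; simp [ent, uu]
    · have : ¬ (2*m = 2*i') := by omega
      simp [ent, uu, this, h', Nat.mul_mod_right]
      ring
  have hodd : ∀ i' ∈ range (k-1), ent k α (2*m) (2*i'+1) * X (2*i'+1)
      = (if i' < m then 2 * vv k α X i' else 0) := by
    intro i' _
    have hpar : (2*i'+1) % 2 = 1 := by omega
    by_cases h' : i' < m
    · have h2 : 2*i'+1 < 2*m := by omega
      simp [ent, vv, h', h2, Nat.mul_mod_right, hpar]
      ring
    · have h2 : ¬ (2*i'+1 < 2*m) := by omega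
      simp [ent, vv, h', h2, Nat.mul_mod_right, hpar]
  rw [sum_congr rfl heven, sum_congr rfl hodd, sum_sub_distrib, Finset.sum_ite_eq' (range k) m,
    if_pos (mem_range.2 hm)] at h
  have hsub : ∑ i' ∈ range (k-1), (if i' < m then 2 * vv k α X i' else 0)
      = ∑ i' ∈ range m, (if i' < m then 2 * vv k α X i' else 0) := by
    refine (sum_subset (by intro t ht; simp only [mem_range] at *; omega) ?_).symm
    intro i' _ hni'
    rw [mem_range] at hni'
    rw [if_neg (by omega)]
  rw [hsub] at h
  have : ∑ i' ∈ range m, (if i' < m then 2 * vv k α X i' else 0)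
      = ∑ i' ∈ range m, 2 * vv k α X i' := by
    apply sum_congr rfl; intro i' hi'; rw [mem_range] at hi'; rw [if_pos hi']
  rw [this, ← Finset.mul_sum, ← Finset.mul_sum] at h
  linarith

private lemma hOrow (k : ℕ) (hk : 2 ≤ k) (α : Fin (2*k) → ℕ) (X : ℕ → ℝ)
    (m : ℕ) (hm : m < k-1)
    (h : ∑ j ∈ range (2*k-1), ent k α (2*m+1) j * X j = 0) :
    (aa k α (2*m+1) - 1) * X (2*m+1)
      + ((∑ i ∈ range k, uu k α X i) - ∑ i ∈ range (m+1), uu k α X i) = 0 := by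
  rw [show 2*k-1 = 2*(k-1)+1 by omega, sum_range_parity, show (k-1)+1 = k by omega] at h
  have hpar : (2*m+1) % 2 = 1 := by omega
  have heven : ∀ i' ∈ range k, ent k α (2*m+1) (2*i') * X (2*i')
      = 2 * uu k α X i' - (if i' < m+1 then 2 * uu k α X i' else 0) := by
    intro i' _
    have hne : ¬ (2*m+1 = 2*i') := by omega
    by_cases h' : i' < m+1
    · have h2 : ¬ (2*m+1 < 2*i') := by omega
      simp [ent, uu, hne, h', h2, Nat.mul_mod_right, hpar]
    · have h2 : 2*m+1 < 2*i' := by omega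
      simp [ent, uu, hne, h', h2, Nat.mul_mod_right, hpar]
      ring
  have hodd : ∀ i' ∈ range (k-1), ent k α (2*m+1) (2*i'+1) * X (2*i'+1)
      = (if i' = m then 2 * ((aa k α (2*m+1) - 1) * X (2*m+1)) else 0) := by
    intro i' _
    have hpar' : (2*i'+1) % 2 = 1 := by omega
    by_cases h' : i' = m
    · subst h'; simp [ent, hpar']; ring
    · have hne : ¬ (2*m+1 = 2*i'+1) := by omega
      simp [ent, hne, h', hpar, hpar']
      exact fun h'' => absurd h''.symm h'
  rw [sum_congr rfl heven, sum_congr rfl hodd, sum_sub_distrib,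
    Finset.sum_ite_eq' (range (k-1)) m, if_pos (mem_range.2 hm)] at h
  have hsub : ∑ i' ∈ range k, (if i' < m+1 then 2 * uu k α X i' else 0)
      = ∑ i' ∈ range (m+1), (if i' < m+1 then 2 * uu k α X i' else 0) := by
    refine (sum_subset (by intro t ht; simp only [mem_range] at *; omega) ?_).symm
    intro i' _ hni'
    rw [mem_range] at hni'
    rw [if_neg (by omega)]
  rw [hsub] at h
  have : ∑ i' ∈ range (m+1), (if i' < m+1 then 2 * uu k α X i' else 0)
      = ∑ i' ∈ range (m+1), 2 * uu k α X i' := by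
    apply sum_congr rfl; intro i' hi'; rw [mem_range] at hi'; rw [if_pos hi']
  rw [this, ← Finset.mul_sum, ← Finset.mul_sum] at h
  linarith
private lemma qsolve (k : ℕ) (hk : 2 ≤ k) (α : Fin (2*k) → ℕ) (hα : ∀ i, 1 ≤ α i)
    (x : Fin (2*k-1) → ℝ) (hx : (Qtilde k α).mulVec x = 0) :
    ((α ⟨1, by omega⟩ : ℝ) - 1) * x ⟨1, by omega⟩ = 0 ∧
    (α ⟨0, by omega⟩ : ℝ) * x ⟨0, by omega⟩ + (α ⟨1, by omega⟩ : ℝ) * x ⟨1, by omega⟩ = 0 ∧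
    ∀ j : Fin (2*k-1), 2 ≤ j.val → x j = 0 := by
  set X : ℕ → ℝ := xx k x with hX
  set U : ℕ → ℝ := uu k α X with hU
  set V : ℕ → ℝ := vv k α X with hV
  set T : ℕ → ℝ := tt k α X with hT
  have hA1 : ∀ m, 1 ≤ aa k α m := aa_one_le k α hα
  have hA0 : ∀ m, 0 < aa k α m := fun m => lt_of_lt_of_le zero_lt_one (hA1 m)
  have hE : ∀ m, m < k → (∑ i ∈ range k, U i) - U m + ∑ i ∈ range m, V i = 0 := by
    intro m hm
    exact hErow k hk α X m hm (hrow k hk α x hx (2*m) (by omega))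
  have hO : ∀ m, m < k-1 → (aa k α (2*m+1) - 1) * X (2*m+1)
      + ((∑ i ∈ range k, U i) - ∑ i ∈ range (m+1), U i) = 0 := by
    intro m hm
    exact hOrow k hk α X m hm (hrow k hk α x hx (2*m+1) (by omega))
  have hTsucc : ∀ m, T (m+1) = T m + (U m + V m) := by
    intro m; rw [hT]; exact sum_range_succ _ m
  have hT0 : T 0 = 0 := by rw [hT]; simp [tt]
  have hR2 : ∀ m, m < k-1 → U (m+1) = U m + V m := by
    intro m hm
    have e1 := hE m (by omega)
    have e2 := hE (m+1) (by omega)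
    rw [sum_range_succ] at e2
    linarith
  have hR1 : ∀ m, m < k-1 → (aa k α (2*m+1) - 1) * X (2*m+1) = T m := by
    intro m hm
    have e1 := hE m (by omega)
    have e2 := hO m hm
    have hTm : T m = ∑ i ∈ range m, U i + ∑ i ∈ range m, V i := by
      rw [hT]; exact sum_add_distrib
    rw [sum_range_succ] at e2
    linarith
  have hR3 : T (k-1) = 0 := by
    have e0 := hE 0 (by omega)
    simp only [range_zero, sum_empty, add_zero] at e0
    have h1 : T (k-1) = ∑ i ∈ range (k-1), U (i+1) := by
      rw [hT]
      exact sum_congr rfl (fun i hi => by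
        rw [mem_range] at hi
        exact (hR2 i hi).symm)
    have h2 := sum_range_succ' U (k-1)
    rw [show (k-1)+1 = k by omega] at h2
    linarith
  -- sign steps
  have hstepP : ∀ m, m < k-1 → 0 < T m → 0 < V m := by
    intro m hm hTp
    have h1 := hR1 m hm
    have ha := hA1 (2*m+1)
    have hXp : 0 < X (2*m+1) := by
      by_contra hc
      push_neg at hc
      have : (aa k α (2*m+1) - 1) * X (2*m+1) ≤ 0 :=
        mul_nonpos_of_nonneg_of_nonpos (by linarith) hc
      linarith
    exact mul_pos (hA0 _) hXp
  have hstepN : ∀ m, m < k-1 → T m < 0 → V m < 0 := by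
    intro m hm hTn
    have h1 := hR1 m hm
    have ha := hA1 (2*m+1)
    have hXn : X (2*m+1) < 0 := by
      by_contra hc
      push_neg at hc
      have : 0 ≤ (aa k α (2*m+1) - 1) * X (2*m+1) :=
        mul_nonneg (by linarith) hc
      linarith
    exact mul_neg_of_pos_of_neg (hA0 _) hXn
  -- chains
  have chainP : ∀ d m, 1 ≤ m → m + d ≤ k-1 → 0 < T m → 0 < U m → 0 < T (m+d) := by
    intro d
    induction d with
    | zero => intro m _ _ hTp _; simpa using hTp
    | succ d ih =>
      intro m h1 h2 hTp hUp
      have hm : m < k-1 := by omega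
      have hVp := hstepP m hm hTp
      have hU1 : 0 < U (m+1) := by rw [hR2 m hm]; linarith
      have hT1 : 0 < T (m+1) := by rw [hTsucc m]; nlinarith [hR2 m hm]
      have := ih (m+1) (by omega) (by omega) hT1 hU1
      rwa [show m+1+d = m+(d+1) by omega] at this
  have chainN : ∀ d m, 1 ≤ m → m + d ≤ k-1 → T m < 0 → U m < 0 → T (m+d) < 0 := by
    intro d
    induction d with
    | zero => intro m _ _ hTn _; simpa using hTn
    | succ d ih =>
      intro m h1 h2 hTn hUn
      have hm : m < k-1 := by omega
      have hVn := hstepN m hm hTn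
      have hU1 : U (m+1) < 0 := by rw [hR2 m hm]; linarith
      have hT1 : T (m+1) < 0 := by rw [hTsucc m]; nlinarith [hR2 m hm]
      have := ih (m+1) (by omega) (by omega) hT1 hU1
      rwa [show m+1+d = m+(d+1) by omega] at this
  -- zero lemma
  have hzero : ∀ m, 1 ≤ m → m ≤ k-1 → T m = 0 ∧ U m = 0 := by
    intro m
    induction m with
    | zero => intro h; omega
    | succ m ih =>
      intro h1 h2
      by_cases hm0 : m = 0
      · subst hm0
        have hU1 : U 1 = U 0 + V 0 := hR2 0 (by omega)
        have hT1 : T 1 = U 0 + V 0 := by rw [hTsucc 0, hT0]; ring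
        have hTU : T 1 = U 1 := by rw [hT1, hU1]
        rcases lt_trichotomy (U 1) 0 with h | h | h
        · exfalso
          have := chainN (k-1-1) 1 le_rfl (by omega) (by linarith [hTU]) h
          rw [show 1+(k-1-1) = k-1 by omega] at this
          linarith [hR3]
        · exact ⟨by rw [hTU, h], h⟩
        · exfalso
          have := chainP (k-1-1) 1 le_rfl (by omega) (by linarith [hTU]) h
          rw [show 1+(k-1-1) = k-1 by omega] at this
          linarith [hR3]
      · obtain ⟨hTm, hUm⟩ := ih (by omega) (by omega)
        have hmk : m < k-1 := by omega
        have hU1 : U (m+1) = V m := by rw [hR2 m hmk, hUm]; ring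
        have hT1 : T (m+1) = V m := by rw [hTsucc m, hTm, hUm]; ring
        rcases lt_trichotomy (V m) 0 with h | h | h
        · exfalso
          have := chainN (k-1-(m+1)) (m+1) (by omega) (by omega)
            (by rw [hT1]; exact h) (by rw [hU1]; exact h)
          rw [show m+1+(k-1-(m+1)) = k-1 by omega] at this
          linarith [hR3]
        · exact ⟨by rw [hT1, h], by rw [hU1, h]⟩
        · exfalso
          have := chainP (k-1-(m+1)) (m+1) (by omega) (by omega)
            (by rw [hT1]; exact h) (by rw [hU1]; exact h)
          rw [show m+1+(k-1-(m+1)) = k-1 by omega] at this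
          linarith [hR3]
  -- conclusions
  have hXeven : ∀ m, 1 ≤ m → m ≤ k-1 → X (2*m) = 0 := by
    intro m h1 h2
    have := (hzero m h1 h2).2
    rw [hU] at this
    unfold uu at this
    rcases mul_eq_zero.mp this with h | h
    · exact absurd h (ne_of_gt (hA0 _))
    · exact h
  have hXodd : ∀ m, 1 ≤ m → m ≤ k-2 → X (2*m+1) = 0 := by
    intro m h1 h2
    have e1 := (hzero m h1 (by omega)).2
    have e2 := (hzero (m+1) (by omega) (by omega)).2
    have hVm : V m = 0 := by
      have := hR2 m (by omega)
      rw [e1, e2] at this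
      linarith
    rw [hV] at hVm
    unfold vv at hVm
    rcases mul_eq_zero.mp hVm with h | h
    · exact absurd h (ne_of_gt (hA0 _))
    · exact h
  have hf1 : (aa k α 1 - 1) * X 1 = 0 := by
    have := hR1 0 (by omega)
    rw [hT0] at this
    simpa using this
  have hf2 : aa k α 0 * X 0 + aa k α 1 * X 1 = 0 := by
    have h1 := hR2 0 (by omega)
    have h2 := (hzero 1 le_rfl (by omega)).2
    rw [h2] at h1
    rw [hU, hV] at h1
    unfold uu vv at h1
    simpa using h1.symm
  have hX1 : X 1 = x ⟨1, by omega⟩ := by rw [hX]; unfold xx; rw [dif_pos (by omega)]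
  have hX0 : X 0 = x ⟨0, by omega⟩ := by rw [hX]; unfold xx; rw [dif_pos (by omega)]
  have hA1' : aa k α 1 = (α ⟨1, by omega⟩ : ℝ) := by unfold aa; rw [dif_pos (by omega)]
  have hA0' : aa k α 0 = (α ⟨0, by omega⟩ : ℝ) := by unfold aa; rw [dif_pos (by omega)]
  refine ⟨by rw [← hA1', ← hX1]; exact hf1, by rw [← hA1', ← hX1, ← hA0', ← hX0]; exact hf2, ?_⟩
  intro j hj
  have hjlt := j.isLt
  have hXj : X j.val = x j := by
    rw [hX]; unfold xx; rw [dif_pos j.isLt]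
  rcases Nat.even_or_odd j.val with ⟨m, hm⟩ | ⟨m, hm⟩
  · have := hXeven m (by omega) (by omega)
    rw [show 2*m = j.val by omega, hXj] at this
    exact this
  · have := hXodd m (by omega) (by omega)
    rw [show 2*m+1 = j.val by omega, hXj] at this
    exact this
private noncomputable def kv (k : ℕ) (α : Fin (2*k) → ℕ) : Fin (2*k-1) → ℝ :=
  fun j => if j.val = 0 then -(1 / (α (Fin.castLE (by omega) j) : ℝ))
    else if j.val = 1 then 1 else 0

private lemma kv_mem (k : ℕ) (hk : 2 ≤ k) (α : Fin (2*k) → ℕ) (hα : ∀ i, 1 ≤ α i)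
    (h1 : α ⟨1, by omega⟩ = 1) : (Qtilde k α).mulVec (kv k α) = 0 := by
  have h0lt : 0 < 2*k-1 := by omega
  have h1lt : 1 < 2*k-1 := by omega
  funext i
  rw [Matrix.mulVec, dotProduct, Pi.zero_apply]
  have hne : (⟨0, h0lt⟩ : Fin (2*k-1)) ≠ ⟨1, h1lt⟩ := by simp [Fin.ext_iff]
  have hout : ∀ j ∈ (univ : Finset (Fin (2*k-1))),
      j ∉ ({⟨0, h0lt⟩, ⟨1, h1lt⟩} : Finset (Fin (2*k-1))) →
      Qtilde k α i j * kv k α j = 0 := by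
    intro j _ hj
    simp only [mem_insert, mem_singleton, Fin.ext_iff] at hj
    push_neg at hj
    have : kv k α j = 0 := by
      unfold kv
      rw [if_neg hj.1, if_neg hj.2]
    rw [this, mul_zero]
  rw [← sum_subset (subset_univ _) hout, sum_pair hne]
  have hkv0 : kv k α ⟨0, h0lt⟩ = -(1 / (α ⟨0, by omega⟩ : ℝ)) := by
    simp [kv]
  have hkv1 : kv k α ⟨1, h1lt⟩ = 1 := by
    simp [kv]
  rcases i with ⟨iv, hiv⟩
  rcases Nat.even_or_odd iv with ⟨m, hm⟩ | ⟨m, hm⟩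
  · -- even row
    have hpar : iv % 2 = 0 := by omega
    by_cases h0 : iv = 0
    · have e0 : Qtilde k α ⟨iv, hiv⟩ ⟨0, h0lt⟩ = 0 := by
        simp [Qtilde, hpar, Fin.ext_iff, h0]
      have e1 : Qtilde k α ⟨iv, hiv⟩ ⟨1, h1lt⟩ = 0 := by
        simp [Qtilde, hpar, Fin.ext_iff, Fin.mk_lt_mk, h0]
      rw [e0, e1]; ring
    · have hgt : 1 < iv := by omega
      have e0 : Qtilde k α ⟨iv, hiv⟩ ⟨0, h0lt⟩ = 2 * (α ⟨0, by omega⟩ : ℝ) := by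
        simp [Qtilde, hpar, Fin.ext_iff, h0]
      have e1 : Qtilde k α ⟨iv, hiv⟩ ⟨1, h1lt⟩ = 2 * (α ⟨1, by omega⟩ : ℝ) := by
        simp [Qtilde, hpar, Fin.ext_iff, Fin.mk_lt_mk, hgt]
      have ha0 : (0:ℝ) < (α ⟨0, by omega⟩ : ℝ) := by exact_mod_cast hα ⟨0, by omega⟩
      rw [e0, e1, hkv0, hkv1, h1]
      push_cast
      field_simp
      norm_num
  · -- odd row
    have hpar : ¬ (iv % 2 = 0) := by omega
    have hi0 : ¬ (iv = 0) := by omega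
    have e0 : Qtilde k α ⟨iv, hiv⟩ ⟨0, h0lt⟩ = 0 := by
      simp [Qtilde, hpar, Fin.ext_iff, Fin.mk_lt_mk, hi0]
    by_cases h1' : iv = 1
    · have e1 : Qtilde k α ⟨iv, hiv⟩ ⟨1, h1lt⟩ = 2 * ((α ⟨1, by omega⟩ : ℝ) - 1) := by
        simp [Qtilde, hpar, Fin.ext_iff, Fin.mk_lt_mk, h1']
      rw [e0, e1, hkv1, h1]
      norm_num
    · have e1 : Qtilde k α ⟨iv, hiv⟩ ⟨1, h1lt⟩ = 0 := by
        simp [Qtilde, hpar, Fin.ext_iff, Fin.mk_lt_mk, h1']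
      rw [e0, e1]; ring

private lemma kv_ne_zero (k : ℕ) (hk : 2 ≤ k) (α : Fin (2*k) → ℕ) : kv k α ≠ 0 := by
  intro h
  have := congrFun h ⟨1, by omega⟩
  simp [kv] at this

/-- `0` is an eigenvalue of `Q̃` iff `α₂ = 1`, and in that case it is a simple
eigenvalue: `rank Q̃ = 2k - 2`. -/
theorem stmt8 (k : ℕ) (hk : 2 ≤ k) (α : Fin (2*k) → ℕ) (hα : ∀ i, 1 ≤ α i)
    (j : Fin (2*k)) (hj : j.val = 2*k - 1) (hlast : 2 ≤ α j) :
    ((∃ x : Fin (2*k-1) → ℝ, x ≠ 0 ∧ (Qtilde k α).mulVec x = 0) ↔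
      α ⟨1, by omega⟩ = 1) ∧
    (α ⟨1, by omega⟩ = 1 → (Qtilde k α).rank = 2*k - 2) := by
  have h0lt : 0 < 2*k-1 := by omega
  have h1lt : 1 < 2*k-1 := by omega
  have ha0 : (0:ℝ) < (α ⟨0, by omega⟩ : ℝ) := by exact_mod_cast hα ⟨0, by omega⟩
  constructor
  · constructor
    · rintro ⟨x, hx0, hx⟩
      obtain ⟨f1, f2, f3⟩ := qsolve k hk α hα x hx
      by_contra hne
      have h2 : (2:ℝ) ≤ (α ⟨1, by omega⟩ : ℝ) := by
        have := hα ⟨1, by omega⟩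
        exact_mod_cast by omega
      have hx1 : x ⟨1, h1lt⟩ = 0 := by
        rcases mul_eq_zero.mp f1 with h | h
        · linarith
        · exact h
      have hx0' : x ⟨0, h0lt⟩ = 0 := by
        rw [hx1, mul_zero, add_zero] at f2
        rcases mul_eq_zero.mp f2 with h | h
        · linarith
        · exact h
      apply hx0
      funext j'
      rcases j' with ⟨jv, hjv⟩
      rcases Nat.lt_or_ge jv 2 with h | h
      · interval_cases jv
        · exact hx0'
        · exact hx1
      · exact f3 ⟨jv, hjv⟩ h
    · intro h1
      exact ⟨kv k α, kv_ne_zero k hk α, kv_mem k hk α hα h1⟩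
  · intro h1
    have hv0 := kv_ne_zero k hk α
    have hker : LinearMap.ker (Qtilde k α).mulVecLin = Submodule.span ℝ {kv k α} := by
      apply le_antisymm
      · intro x hxk
        rw [LinearMap.mem_ker, Matrix.mulVecLin_apply] at hxk
        obtain ⟨f1, f2, f3⟩ := qsolve k hk α hα x hxk
        rw [Submodule.mem_span_singleton]
        refine ⟨x ⟨1, h1lt⟩, ?_⟩
        funext j'
        rcases j' with ⟨jv, hjv⟩
        rw [Pi.smul_apply, smul_eq_mul]
        rcases Nat.lt_or_ge jv 2 with h | h
        · interval_cases jv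
          · have hkv0 : kv k α ⟨0, hjv⟩ = -(1 / (α ⟨0, by omega⟩ : ℝ)) := by simp [kv]
            rw [hkv0]
            rw [h1] at f2
            push_cast at f2
            field_simp
            linarith
          · have hkv1 : kv k α ⟨1, hjv⟩ = 1 := by simp [kv]
            rw [hkv1, mul_one]
        · have hjv0 : jv ≠ 0 := by omega
          have hjv1 : jv ≠ 1 := by omega
          have hkv : kv k α ⟨jv, hjv⟩ = 0 := by simp [kv, hjv0, hjv1]
          rw [hkv, mul_zero]
          exact (f3 ⟨jv, hjv⟩ h).symm
      · rw [Submodule.span_le, Set.singleton_subset_iff]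
        rw [SetLike.mem_coe, LinearMap.mem_ker, Matrix.mulVecLin_apply]
        exact kv_mem k hk α hα h1
    have hrk := LinearMap.finrank_range_add_finrank_ker (Qtilde k α).mulVecLin
    rw [hker, finrank_span_singleton hv0] at hrk
    have hdim : Module.finrank ℝ (Fin (2*k-1) → ℝ) = 2*k-1 := by simp
    rw [hdim] at hrk
    have hrank : (Qtilde k α).rank = Module.finrank ℝ (LinearMap.range (Qtilde k α).mulVecLin) :=
      rfl
    omega
end

section
/- Let A_{2k-1} be the adjacency matrix of the antiregular graph H_{2k-1} = C(1,1,...,1) on 2k-1 vertices. Then the inertia of A_{2k-1} is (k-1, 1, k-1): it has exactly k-1 negative eigenvalues, one zero eigenvalue, and k-1 positive eigenvalues. -/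
open Finset Matrix

noncomputable instance {l : ℕ} {α : Fin l → ℕ} : DecidableRel (Cgraph l α).Adj :=
  fun _ _ => Classical.dec _

abbrev Vb (k : ℕ) := Σ i : Fin (2*k-1), Fin 1

def vert (k : ℕ) (j : ℕ) (h : j < 2*k-1) : Vb k := ⟨⟨j, h⟩, 0⟩

lemma sig_eq {k : ℕ} (u v : Vb k) (h : u.1 = v.1) : u = v := by
  obtain ⟨a, x⟩ := u; obtain ⟨b, y⟩ := v
  cases h
  exact congrArg _ (Subsingleton.elim x y)

lemma hAval (k : ℕ) (i j : ℕ) (hi : i < 2*k-1) (hj : j < 2*k-1) :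
    (Cgraph (2*k-1) fun _ => 1).adjMatrix ℝ (vert k i hi) (vert k j hj)
      = if (i ≠ j ∧ (max i j) % 2 = 0) then 1 else 0 := by
  have hk : 1 ≤ k := by omega
  have hM : max i j < 2*k-1 := max_lt hi hj
  rw [SimpleGraph.adjMatrix_apply]
  by_cases h : i ≠ j ∧ (max i j) % 2 = 0
  · rw [if_pos h, if_pos]
    refine ⟨fun he => h.1 ?_, Or.inr ⟨fun he => h.1 (Fin.val_eq_val _ _ |>.mpr he), ?_⟩⟩
    · exact congrArg (fun w => w.1.val) he
    · show Even (2*k-1-1 - max i j)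
      rw [Nat.even_iff]; omega
  · rw [if_neg h, if_neg]
    push_neg at h
    rintro ⟨hne, (⟨h1, -⟩ | ⟨h1, h2⟩)⟩
    · exact hne (sig_eq _ _ h1)
    · have hij : i ≠ j := fun he => h1 (Fin.val_eq_val _ _ |>.mp he)
      have h2' : Even (2*k-1-1 - max i j) := h2
      rw [Nat.even_iff] at h2'
      exact h hij (by omega)

def Wp (k : ℕ) : Matrix (Vb k) (Fin (k-1)) ℝ := fun u t =>
  (if u = vert k (2*t.val+1) (by have := t.isLt; omega) then 2 else 0) +
  (if u = vert k (2*t.val+2) (by have := t.isLt; omega) then 1 else 0)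

def Wn (k : ℕ) : Matrix (Vb k) (Fin (k-1)) ℝ := fun u t =>
  (if u = vert k (2*t.val+2) (by have := t.isLt; omega) then 1 else 0) -
  (if u = vert k 0 (by have := t.isLt; omega) then 1 else 0)

lemma hA1 (k : ℕ) (a b : ℕ) (ha : 2*a+1 < 2*k-1) (hb : 2*b+1 < 2*k-1) :
    (Cgraph (2*k-1) fun _ => 1).adjMatrix ℝ (vert k (2*a+1) ha) (vert k (2*b+1) hb) = 0 := by
  rw [hAval, if_neg]
  rintro ⟨h1, h2⟩
  rcases Nat.le_total (2*a+1) (2*b+1) with h | h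
  · rw [Nat.max_eq_right h] at h2; omega
  · rw [Nat.max_eq_left h] at h2; omega

lemma hA2 (k : ℕ) (a b : ℕ) (ha : 2*a+1 < 2*k-1) (hb : 2*b+2 < 2*k-1) :
    (Cgraph (2*k-1) fun _ => 1).adjMatrix ℝ (vert k (2*a+1) ha) (vert k (2*b+2) hb)
      = if a ≤ b then 1 else 0 := by
  rw [hAval]
  by_cases h : a ≤ b
  · rw [if_pos h, if_pos]
    refine ⟨by omega, ?_⟩
    rw [Nat.max_eq_right (by omega)]; omega
  · rw [if_neg h, if_neg]
    rintro ⟨-, h2⟩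
    rw [Nat.max_eq_left (by omega)] at h2; omega

lemma hA3 (k : ℕ) (a b : ℕ) (ha : 2*a+2 < 2*k-1) (hb : 2*b+1 < 2*k-1) :
    (Cgraph (2*k-1) fun _ => 1).adjMatrix ℝ (vert k (2*a+2) ha) (vert k (2*b+1) hb)
      = if b ≤ a then 1 else 0 := by
  rw [hAval]
  by_cases h : b ≤ a
  · rw [if_pos h, if_pos]
    refine ⟨by omega, ?_⟩
    rw [Nat.max_eq_left (by omega)]; omega
  · rw [if_neg h, if_neg]
    rintro ⟨-, h2⟩
    rw [Nat.max_eq_right (by omega)] at h2; omega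

lemma hA4 (k : ℕ) (a b : ℕ) (ha : 2*a+2 < 2*k-1) (hb : 2*b+2 < 2*k-1) :
    (Cgraph (2*k-1) fun _ => 1).adjMatrix ℝ (vert k (2*a+2) ha) (vert k (2*b+2) hb)
      = if a = b then 0 else 1 := by
  rw [hAval]
  by_cases h : a = b
  · rw [if_pos h, if_neg (by omega)]
  · rw [if_neg h, if_pos]
    refine ⟨by omega, ?_⟩
    rcases Nat.le_total (2*a+2) (2*b+2) with h' | h'
    · rw [Nat.max_eq_right h']; omega
    · rw [Nat.max_eq_left h']; omega

lemma hA5 (k : ℕ) (a : ℕ) (ha : 2*a+2 < 2*k-1) (h0 : 0 < 2*k-1) :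
    (Cgraph (2*k-1) fun _ => 1).adjMatrix ℝ (vert k (2*a+2) ha) (vert k 0 h0) = 1 := by
  rw [hAval, if_pos]
  refine ⟨by omega, ?_⟩
  rw [Nat.max_eq_left (by omega)]; omega

lemma hA6 (k : ℕ) (a : ℕ) (ha : 2*a+2 < 2*k-1) (h0 : 0 < 2*k-1) :
    (Cgraph (2*k-1) fun _ => 1).adjMatrix ℝ (vert k 0 h0) (vert k (2*a+2) ha) = 1 := by
  rw [hAval, if_pos]
  refine ⟨by omega, ?_⟩
  rw [Nat.max_eq_right (by omega)]; omega

lemma hA7 (k : ℕ) (h0 : 0 < 2*k-1) :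
    (Cgraph (2*k-1) fun _ => 1).adjMatrix ℝ (vert k 0 h0) (vert k 0 h0) = 0 := by
  rw [hAval, if_neg]; omega

lemma Wp_entry (k : ℕ) (t s : Fin (k-1)) :
    ((Wp k)ᵀ * ((Cgraph (2*k-1) fun _ => 1).adjMatrix ℝ) * Wp k) t s
      = 3 + if t = s then 1 else 0 := by
  simp only [Matrix.mul_apply, Matrix.transpose_apply, Wp, add_mul, mul_add, ite_mul, mul_ite,
    zero_mul, mul_zero, one_mul, mul_one, Finset.sum_add_distrib, Finset.sum_ite_eq',
    Finset.mem_univ, if_true]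
  rw [hA1, hA2, hA3, hA4]
  simp only [Fin.ext_iff]
  split_ifs <;> first | (exfalso; omega) | norm_num

lemma Wn_entry (k : ℕ) (t s : Fin (k-1)) :
    ((Wn k)ᵀ * ((Cgraph (2*k-1) fun _ => 1).adjMatrix ℝ) * Wn k) t s
      = if t = s then -2 else -1 := by
  simp only [Matrix.mul_apply, Matrix.transpose_apply, Wn, sub_mul, mul_sub, ite_mul, mul_ite,
    zero_mul, mul_zero, one_mul, mul_one, Finset.sum_sub_distrib, Finset.sum_ite_eq',
    Finset.mem_univ, if_true]
  rw [hA4, hA5, hA6, hA7]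
  simp only [Fin.ext_iff]
  split_ifs <;> first | (exfalso; omega) | norm_num

lemma conj_quad {ι κ : Type*} [Fintype ι] [Fintype κ] (W : Matrix ι κ ℝ) (M : Matrix ι ι ℝ)
    (a : κ → ℝ) :
    (W *ᵥ a) ⬝ᵥ (M *ᵥ (W *ᵥ a)) = a ⬝ᵥ ((Wᵀ * M * W) *ᵥ a) := by
  rw [← mulVec_mulVec, ← mulVec_mulVec, dotProduct_mulVec a, vecMul_transpose,
    dotProduct_mulVec (W *ᵥ a)]

lemma pos_form (k : ℕ) (a : Fin (k-1) → ℝ) (ha : a ≠ 0) :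
    0 < (Wp k *ᵥ a) ⬝ᵥ (((Cgraph (2*k-1) fun _ => 1).adjMatrix ℝ) *ᵥ (Wp k *ᵥ a)) := by
  rw [conj_quad]
  set S := ∑ s, a s with hS
  have he : ((Wp k)ᵀ * ((Cgraph (2*k-1) fun _ => 1).adjMatrix ℝ) * Wp k) *ᵥ a
      = fun t => 3*S + a t := by
    funext t
    simp only [mulVec, dotProduct, Wp_entry, add_mul, ite_mul, one_mul, zero_mul,
      Finset.sum_add_distrib, Finset.sum_ite_eq, Finset.mem_univ, if_true, ← Finset.mul_sum, hS]
  rw [he]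
  have h1 : a ⬝ᵥ (fun t => 3*S + a t) = 3*S*S + ∑ t, a t * a t := by
    calc a ⬝ᵥ (fun t => 3*S + a t) = ∑ t, (3*S*a t + a t * a t) := by
          apply Finset.sum_congr rfl; intro i _; ring
      _ = 3*S*(∑ t, a t) + ∑ t, a t*a t := by rw [Finset.sum_add_distrib, ← Finset.mul_sum]
      _ = 3*S*S + ∑ t, a t*a t := by rw [← hS]
  rw [h1]
  obtain ⟨t, ht⟩ := Function.ne_iff.mp ha
  have h2 : 0 < ∑ t, a t * a t :=
    Finset.sum_pos' (fun i _ => mul_self_nonneg _) ⟨t, Finset.mem_univ t, mul_self_pos.mpr ht⟩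
  nlinarith [sq_nonneg S]

lemma neg_form (k : ℕ) (a : Fin (k-1) → ℝ) (ha : a ≠ 0) :
    (Wn k *ᵥ a) ⬝ᵥ (((Cgraph (2*k-1) fun _ => 1).adjMatrix ℝ) *ᵥ (Wn k *ᵥ a)) < 0 := by
  rw [conj_quad]
  set S := ∑ s, a s with hS
  have he : ((Wn k)ᵀ * ((Cgraph (2*k-1) fun _ => 1).adjMatrix ℝ) * Wn k) *ᵥ a
      = fun t => -S - a t := by
    funext t
    have : ∀ s, (if t = s then (-2:ℝ) else -1) = -1 + if t = s then -1 else 0 := by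
      intro s; split_ifs <;> norm_num
    simp only [mulVec, dotProduct, Wn_entry, this, add_mul, ite_mul, one_mul, zero_mul,
      neg_one_mul, Finset.sum_add_distrib, Finset.sum_ite_eq, Finset.mem_univ, if_true,
      Finset.sum_neg_distrib, ← Finset.mul_sum, hS]
    ring
  rw [he]
  have h1 : a ⬝ᵥ (fun t => -S - a t) = -(S*S) - ∑ t, a t * a t := by
    calc a ⬝ᵥ (fun t => -S - a t) = ∑ t, (-S*a t - a t * a t) := by
          apply Finset.sum_congr rfl; intro i _; ring
      _ = -S*(∑ t, a t) - ∑ t, a t*a t := by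
          rw [Finset.sum_sub_distrib, ← Finset.mul_sum]
      _ = -(S*S) - ∑ t, a t*a t := by rw [← hS]; ring
  rw [h1]
  obtain ⟨t, ht⟩ := Function.ne_iff.mp ha
  have h2 : 0 < ∑ t, a t * a t :=
    Finset.sum_pos' (fun i _ => mul_self_nonneg _) ⟨t, Finset.mem_univ t, mul_self_pos.mpr ht⟩
  nlinarith [sq_nonneg S]

lemma quad_repr {ι : Type*} [Fintype ι] [DecidableEq ι] {A : Matrix ι ι ℝ} (hA : A.IsHermitian)
    (x : ι → ℝ) :
    x ⬝ᵥ (A *ᵥ x) = ∑ i, hA.eigenvalues i * ((star hA.eigenvectorUnitary.val *ᵥ x) i)^2 := by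
  conv_lhs => rw [hA.spectral_theorem, Unitary.conjStarAlgAut_apply]
  rw [← mulVec_mulVec, ← mulVec_mulVec, dotProduct_mulVec]
  have h1 : x ᵥ* (hA.eigenvectorUnitary : Matrix ι ι ℝ) = star hA.eigenvectorUnitary.val *ᵥ x := by
    rw [← mulVec_transpose]
    congr 1
  rw [h1]
  simp [dotProduct, mulVec_diagonal]
  exact Finset.sum_congr rfl fun i _ => by ring

lemma key {ι : Type*} [Fintype ι] {m : ℕ} (ev : ι → ℝ) (p : ι → Prop) [DecidablePred p]
    (hp : ∀ i, ¬ p i → 0 ≤ ev i)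
    (Y : (Fin m → ℝ) →ₗ[ℝ] (ι → ℝ))
    (hq : ∀ c, c ≠ 0 → (∑ i, ev i * (Y c i)^2) < 0) :
    m ≤ (Finset.univ.filter p).card := by
  by_contra hcon
  push_neg at hcon
  set S := Finset.univ.filter p with hS
  let g : (Fin m → ℝ) →ₗ[ℝ] (↥S → ℝ) :=
    (LinearMap.funLeft ℝ ℝ (fun i : ↥S => (i : ι))).comp Y
  have hginj : ¬ Function.Injective g := by
    intro hinj
    have := LinearMap.finrank_le_finrank_of_injective hinj
    simp [Module.finrank_pi] at this
    omega
  rw [← LinearMap.ker_eq_bot] at hginj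
  obtain ⟨c, hc, hc0⟩ := Submodule.exists_mem_ne_zero_of_ne_bot hginj
  have hYc : ∀ i : ι, p i → Y c i = 0 := by
    intro i hi
    have : g c ⟨i, by simp [hS, hi]⟩ = 0 := by rw [LinearMap.mem_ker.mp hc]; rfl
    exact this
  have : (0:ℝ) ≤ ∑ i, ev i * (Y c i)^2 := by
    apply Finset.sum_nonneg
    intro i _
    by_cases hpi : p i
    · simp [hYc i hpi]
    · exact mul_nonneg (hp i hpi) (sq_nonneg _)
  exact absurd (hq c hc0) (not_lt.mpr this)

lemma det_zero (k : ℕ) (hk : 1 ≤ k) :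
    ((Cgraph (2*k-1) fun _ => 1).adjMatrix ℝ).det = 0 := by
  by_cases hk2 : 2 ≤ k
  · rw [← Matrix.exists_mulVec_eq_zero_iff]
    have h0 : 0 < 2*k-1 := by omega
    have h1 : 1 < 2*k-1 := by omega
    refine ⟨fun u => (if u = vert k 0 h0 then (1:ℝ) else 0) - (if u = vert k 1 h1 then 1 else 0),
      ?_, ?_⟩
    · intro hv
      have h01 : vert k 0 h0 ≠ vert k 1 h1 := by
        intro h
        have := congrArg (fun u => u.1.val) h
        simp [vert] at this
      have := congrFun hv (vert k 0 h0)
      simp [h01] at this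
    · funext u
      obtain ⟨⟨i, hi⟩, x⟩ := u
      have hx : x = 0 := Subsingleton.elim _ _
      subst hx
      show (∑ w, _ * _) = (0 : ℝ)
      simp only [mul_sub, mul_ite, mul_one, mul_zero, Finset.sum_sub_distrib,
        Finset.sum_ite_eq', Finset.mem_univ, if_true]
      have e0 : (Cgraph (2*k-1) fun _ => 1).adjMatrix ℝ (vert k i hi) (vert k 0 h0)
          = if (i ≠ 0 ∧ (max i 0) % 2 = 0) then 1 else 0 := hAval k i 0 hi h0
      have e1 : (Cgraph (2*k-1) fun _ => 1).adjMatrix ℝ (vert k i hi) (vert k 1 h1)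
          = if (i ≠ 1 ∧ (max i 1) % 2 = 0) then 1 else 0 := hAval k i 1 hi h1
      rw [show (⟨⟨i, hi⟩, 0⟩ : Vb k) = vert k i hi from rfl, e0, e1]
      match i with
      | 0 => norm_num
      | 1 => norm_num
      | (m+2) =>
        rw [Nat.max_eq_left (by omega), Nat.max_eq_left (by omega)]
        by_cases hm : (m+2) % 2 = 0
        · rw [if_pos ⟨by omega, hm⟩, if_pos ⟨by omega, hm⟩]; norm_num
        · rw [if_neg (fun h => hm h.2), if_neg (fun h => hm h.2)]; norm_num
  · have hk1 : k = 1 := by omega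
    subst hk1
    have hA0 : ((Cgraph (2*1-1) fun _ => 1).adjMatrix ℝ) = 0 := by
      ext u v
      obtain ⟨⟨i, hi⟩, x⟩ := u
      obtain ⟨⟨j, hj⟩, y⟩ := v
      have hi' : i = 0 := by omega
      have hj' : j = 0 := by omega
      subst hi'; subst hj'
      have hx : x = 0 := Subsingleton.elim _ _
      have hy : y = 0 := Subsingleton.elim _ _
      subst hx; subst hy
      rw [show (⟨⟨0, hi⟩, 0⟩ : Vb 1) = vert 1 0 hi from rfl, hAval 1 0 0 hi hj]
      norm_num
    rw [hA0]
    exact @Matrix.det_zero _ _ _ _ _ (by exact ⟨vert 1 0 (by omega)⟩)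

/-- The adjacency matrix of the antiregular graph `H_{2k-1} = C(1,…,1)` on
`2k-1` vertices has inertia `(k-1, 1, k-1)`. -/
theorem stmt10 (k : ℕ) (hk : 1 ≤ k)
    (hA : (((Cgraph (2*k-1) fun _ => 1).adjMatrix ℝ)).IsHermitian) :
    (Finset.univ.filter fun i => hA.eigenvalues i < 0).card = k - 1 ∧
    (Finset.univ.filter fun i => hA.eigenvalues i = 0).card = 1 ∧
    (Finset.univ.filter fun i => 0 < hA.eigenvalues i).card = k - 1 := by
  have hcard : Fintype.card (Vb k) = 2*k-1 := by simp
  -- negative eigenvalues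
  have hneg : k-1 ≤ (Finset.univ.filter fun i => hA.eigenvalues i < 0).card := by
    apply key hA.eigenvalues (fun i => hA.eigenvalues i < 0) (fun i hi => le_of_not_gt hi)
      ((Matrix.mulVecLin (star hA.eigenvectorUnitary.val)).comp (Matrix.mulVecLin (Wn k)))
    intro c hc
    have he : ((Matrix.mulVecLin (star hA.eigenvectorUnitary.val)).comp
        (Matrix.mulVecLin (Wn k))) c = star hA.eigenvectorUnitary.val *ᵥ (Wn k *ᵥ c) := rfl
    rw [he, ← quad_repr hA (Wn k *ᵥ c)]
    exact neg_form k c hc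
  -- positive eigenvalues
  have hpos : k-1 ≤ (Finset.univ.filter fun i => 0 < hA.eigenvalues i).card := by
    apply key (fun i => -hA.eigenvalues i) (fun i => 0 < hA.eigenvalues i)
      (fun i hi => neg_nonneg.mpr (le_of_not_gt hi))
      ((Matrix.mulVecLin (star hA.eigenvectorUnitary.val)).comp (Matrix.mulVecLin (Wp k)))
    intro c hc
    have he : ((Matrix.mulVecLin (star hA.eigenvectorUnitary.val)).comp
        (Matrix.mulVecLin (Wp k))) c = star hA.eigenvectorUnitary.val *ᵥ (Wp k *ᵥ c) := rfl
    have h := pos_form k c hc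
    rw [quad_repr hA (Wp k *ᵥ c)] at h
    rw [he]
    simp only [neg_mul, Finset.sum_neg_distrib]
    exact neg_lt_zero.mpr h
  -- zero eigenvalue
  have hzero : 1 ≤ (Finset.univ.filter fun i => hA.eigenvalues i = 0).card := by
    have hdet := det_zero k hk
    rw [hA.det_eq_prod_eigenvalues] at hdet
    obtain ⟨i, -, hi⟩ := Finset.prod_eq_zero_iff.mp hdet
    refine Finset.card_pos.mpr ⟨i, Finset.mem_filter.mpr ⟨Finset.mem_univ i, ?_⟩⟩
    exact_mod_cast hi
  -- partition
  have hsplit : (Finset.univ.filter fun i => hA.eigenvalues i < 0).card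
      + ((Finset.univ.filter fun i => hA.eigenvalues i = 0).card
      + (Finset.univ.filter fun i => 0 < hA.eigenvalues i).card) = 2*k-1 := by
    have hu2 : (Finset.univ : Finset (Vb k))
        = (Finset.univ.filter fun i => hA.eigenvalues i < 0)
          ∪ ((Finset.univ.filter fun i => hA.eigenvalues i = 0)
          ∪ (Finset.univ.filter fun i => 0 < hA.eigenvalues i)) := by
      ext i
      simp only [Finset.mem_filter, Finset.mem_union, Finset.mem_univ, true_and, true_iff]
      rcases lt_trichotomy (hA.eigenvalues i) 0 with h | h | h
      · exact Or.inl h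
      · exact Or.inr (Or.inl h)
      · exact Or.inr (Or.inr h)
    have hd23 : Disjoint (Finset.univ.filter fun i => hA.eigenvalues i = 0)
        (Finset.univ.filter fun i => 0 < hA.eigenvalues i) := by
      rw [Finset.disjoint_left]
      intro i h1 h2
      simp only [Finset.mem_filter] at h1 h2
      exact absurd h2.2 (by rw [h1.2]; exact lt_irrefl 0)
    have hd1 : Disjoint (Finset.univ.filter fun i => hA.eigenvalues i < 0)
        ((Finset.univ.filter fun i => hA.eigenvalues i = 0)
          ∪ (Finset.univ.filter fun i => 0 < hA.eigenvalues i)) := by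
      rw [Finset.disjoint_left]
      intro i h1 h2
      simp only [Finset.mem_filter, Finset.mem_union, Finset.mem_univ, true_and] at h1 h2
      rcases h2 with h | h
      · exact absurd h1 (by rw [h]; exact lt_irrefl 0)
      · exact absurd h1 (not_lt.mpr (le_of_lt h))
    have h2 : (Finset.univ : Finset (Vb k)).card = 2*k-1 := by simp
    rw [hu2, Finset.card_union_of_disjoint hd1, Finset.card_union_of_disjoint hd23] at h2
    exact h2
  refine ⟨?_, ?_, ?_⟩ <;> omega
end

section
/- For every positive integer n, every eigenvalue λ of the adjacency matrix A_n of the antiregular graph H_n with λ ∉ {0, -1} satisfies either λ < (-1-√2)/2 or λ > (-1+√2)/2; i.e., the closed interval [(-1-√2)/2, (-1+√2)/2] contains no eigenvalue of A_n other than 0 and -1. -/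
open Finset Matrix

lemma adj_iff_s11 (n : ℕ) (i j : Fin n) :
    (Cgraph n fun _ => 1).Adj ⟨j, 0⟩ ⟨i, 0⟩ ↔
      (j : ℕ) ≠ (i : ℕ) ∧ Even (n - 1 - max (j : ℕ) (i : ℕ)) := by
  constructor
  · rintro ⟨hne, ⟨hfst, -⟩ | ⟨-, hev⟩⟩
    · exact absurd (by cases hfst; rfl) hne
    · refine ⟨fun h => ?_, hev⟩
      apply hne
      have : j = i := Fin.ext h
      cases this; rfl
  · rintro ⟨hne, hev⟩
    have hji : j ≠ i := fun h => hne (by cases h; rfl)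
    exact ⟨fun h => hji (congrArg Sigma.fst h), Or.inr ⟨fun h => hji (Fin.ext (by exact_mod_cast congrArg Fin.val h)), hev⟩⟩

lemma eqE (n : ℕ) (μ : ℝ) (x : (Σ i : Fin n, Fin 1) → ℝ)
    (hx : ((Cgraph n fun _ => 1).adjMatrix ℝ).mulVec x = μ • x)
    (z : ℕ → ℝ) (hz : ∀ (i : ℕ) (h : i < n), z i = x ⟨⟨i, h⟩, 0⟩)
    (j : ℕ) (hj : j < n) :
    μ * z j = (if Even (n - 1 - j) then ∑ i ∈ Finset.range j, z i else 0)
      + ∑ i ∈ Finset.Ico (j+1) n, (if Even (n - 1 - i) then z i else 0) := by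
  have hv := congrFun hx ⟨⟨j, hj⟩, 0⟩
  rw [SimpleGraph.adjMatrix_mulVec_apply, SimpleGraph.neighborFinset_eq_filter,
    Finset.sum_filter] at hv
  have hsig : ∑ u : Σ _ : Fin n, Fin 1,
      (if (Cgraph n fun _ => 1).Adj ⟨⟨j, hj⟩, 0⟩ u then x u else 0)
      = ∑ i ∈ Finset.range n, (if (j ≠ i ∧ Even (n - 1 - max j i)) then z i else 0) := by
    rw [← Finset.univ_sigma_univ, Finset.sum_sigma]
    have h1 : ∀ i : Fin n, (∑ u : Fin 1,
        if (Cgraph n fun _ => 1).Adj ⟨⟨j, hj⟩, 0⟩ ⟨i, u⟩ then x ⟨i, u⟩ else 0)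
        = (if (j ≠ (i:ℕ) ∧ Even (n - 1 - max j (i:ℕ))) then z (i:ℕ) else 0) := by
      intro i
      rw [Fin.sum_univ_one]
      simp only [adj_iff_s11 n i ⟨j, hj⟩, hz (i : ℕ) i.isLt, Fin.eta]
    rw [Finset.sum_congr rfl fun i _ => h1 i]
    exact Fin.sum_univ_eq_sum_range (fun m => if (j ≠ m ∧ Even (n - 1 - j ⊔ m)) then z m else 0) n
  rw [hsig] at hv
  have hrhs : (μ • x) ⟨⟨j, hj⟩, 0⟩ = μ * z j := by
    simp [hz j hj]
  rw [hrhs] at hv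
  rw [← hv]
  rw [Finset.range_eq_Ico,
    ← Finset.sum_Ico_consecutive _ (Nat.zero_le j) hj.le,
    Finset.sum_eq_sum_Ico_succ_bot hj]
  have h2 : ∀ i ∈ Finset.Ico 0 j, (if (j ≠ i ∧ Even (n - 1 - j ⊔ i)) then z i else 0)
      = (if Even (n - 1 - j) then z i else 0) := by
    intro i hi
    have hij : i < j := (Finset.mem_Ico.mp hi).2
    rw [sup_eq_left.mpr hij.le]
    by_cases hP : Even (n-1-j)
    · rw [if_pos ⟨hij.ne', hP⟩, if_pos hP]
    · rw [if_neg (by tauto), if_neg hP]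
  have h3 : ∀ i ∈ Finset.Ico (j+1) n, (if (j ≠ i ∧ Even (n - 1 - j ⊔ i)) then z i else 0)
      = (if Even (n - 1 - i) then z i else 0) := by
    intro i hi
    have hij : j < i := (Finset.mem_Ico.mp hi).1
    rw [sup_eq_right.mpr hij.le]
    by_cases hP : Even (n-1-i)
    · rw [if_pos ⟨hij.ne, hP⟩, if_pos hP]
    · rw [if_neg (by tauto), if_neg hP]
  rw [Finset.sum_congr rfl h2, Finset.sum_congr rfl h3]
  have h4 : (if (j ≠ j ∧ Even (n - 1 - j ⊔ j)) then z j else 0) = 0 := by simp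
  rw [h4]
  rw [← Finset.range_eq_Ico]
  by_cases hP : Even (n - 1 - j)
  · simp [hP]
  · simp [hP]


lemma even_add_two' (a : ℕ) : Even (a+2) ↔ Even a := by
  rw [show a+2 = a+1+1 from rfl, Nat.even_add_one, Nat.even_add_one, not_not]

section loc
variable {n : ℕ} {μ : ℝ} {z : ℕ → ℝ}

def Econd (n : ℕ) (μ : ℝ) (z : ℕ → ℝ) : Prop := ∀ j, j < n → μ * z j =
    (if Even (n - 1 - j) then ∑ i ∈ Finset.range j, z i else 0)
      + ∑ i ∈ Finset.Ico (j+1) n, (if Even (n - 1 - i) then z i else 0)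

variable (hE : Econd n μ z)
include hE

lemma locC (j : ℕ) (hj : j + 2 < n) (hev : Even (n - 1 - (j+2))) :
    (μ + 1) * (z (j+2) - z j) = z (j+1) := by
  have h1 := hE j (by omega)
  have h2 := hE (j+2) hj
  have e0 : n - 1 - j = (n - 1 - (j+2)) + 2 := by omega
  have e1 : n - 1 - (j+1) = (n - 1 - (j+2)) + 1 := by omega
  have hevj : Even (n - 1 - j) := by rw [e0, even_add_two']; exact hev
  have hoddj1 : ¬ Even (n - 1 - (j+1)) := by
    rw [e1, Nat.even_add_one]; exact fun h => h hev
  rw [if_pos hevj, Finset.sum_eq_sum_Ico_succ_bot (by omega : j+1 < n),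
    Finset.sum_eq_sum_Ico_succ_bot (by omega : j+1+1 < n), if_neg hoddj1,
    show j+1+1 = j+2 from rfl, if_pos hev] at h1
  rw [if_pos hev, show j+2 = j+1+1 from rfl, Finset.sum_range_succ,
    Finset.sum_range_succ, show j+1+1 = j+2 from rfl] at h2
  linarith

lemma locI (j : ℕ) (hj : j + 2 < n) (hev : ¬ Even (n - 1 - (j+2))) :
    μ * (z j - z (j+2)) = z (j+1) := by
  have h1 := hE j (by omega)
  have h2 := hE (j+2) hj
  have e0 : n - 1 - j = (n - 1 - (j+2)) + 2 := by omega
  have e1 : n - 1 - (j+1) = (n - 1 - (j+2)) + 1 := by omega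
  have hoddj : ¬ Even (n - 1 - j) := by rw [e0, even_add_two']; exact hev
  have hevj1 : Even (n - 1 - (j+1)) := by
    rw [e1, Nat.even_add_one]; exact hev
  rw [if_neg hoddj, Finset.sum_eq_sum_Ico_succ_bot (by omega : j+1 < n),
    Finset.sum_eq_sum_Ico_succ_bot (by omega : j+1+1 < n), if_pos hevj1,
    show j+1+1 = j+2 from rfl, if_neg hev] at h1
  rw [if_neg hev] at h2
  linarith

lemma locTop (hn : 2 ≤ n) : μ * z (n-2) = z (n-1) := by
  have h := hE (n-2) (by omega)
  have e0 : n - 1 - (n-2) = 1 := by omega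
  have e1 : n - 2 + 1 = n - 1 := by omega
  have e2 : n - 1 - (n-1) = 0 := by omega
  rw [e0, e1] at h
  rw [Finset.sum_eq_sum_Ico_succ_bot (by omega : n-1 < n), e2,
    show (n-1)+1 = n from by omega, Finset.Ico_self, Finset.sum_empty] at h
  norm_num at h
  exact h

lemma locClose (hn : 2 ≤ n) (h0 : μ ≠ 0) (h1 : μ ≠ -1) : z 0 = z 1 := by
  have hA := hE 0 (by omega)
  have hB := hE 1 (by omega)
  rw [Finset.sum_eq_sum_Ico_succ_bot (by omega : 1 < n)] at hA
  simp only [Finset.range_zero, Finset.sum_empty, ite_self, zero_add] at hA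
  rw [Finset.sum_range_one] at hB
  by_cases hP : Even (n - 1 - 1)
  · rw [if_pos hP] at hA hB
    have hmul : (μ + 1) * (z 0 - z 1) = 0 := by linarith
    have : μ + 1 ≠ 0 := fun h => h1 (by linarith)
    have := mul_eq_zero.mp hmul
    rcases this with h | h
    · exact absurd h ‹μ + 1 ≠ 0›
    · linarith
  · rw [if_neg hP] at hA hB
    have hmul : μ * (z 0 - z 1) = 0 := by linarith
    rcases mul_eq_zero.mp hmul with h | h
    · exact absurd h h0
    · linarith
end loc


lemma mono_rec (K : ℕ) (e : ℝ) (he : 2 ≤ e) (u : ℕ → ℝ)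
    (h0 : 0 ≤ u 0) (h1 : u 1 = e * u 0)
    (hrec : ∀ t, 1 ≤ t → t + 2 ≤ K → u (t+1) = e * u t - u (t-1)) :
    ∀ t, t + 2 ≤ K → 0 ≤ u t ∧ u t ≤ u (t+1) := by
  intro t
  induction t with
  | zero => intro _; exact ⟨h0, by nlinarith⟩
  | succ t ih =>
    intro ht
    obtain ⟨hA, hB⟩ := ih (by omega)
    have hr := hrec (t+1) (by omega) ht
    simp only [Nat.add_sub_cancel] at hr
    constructor
    · linarith
    · nlinarith

lemma chain_le (K : ℕ) (u : ℕ → ℝ)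
    (hm : ∀ t, t + 2 ≤ K → u t ≤ u (t+1)) :
    ∀ s, s + 1 ≤ K → ∀ t, t ≤ s → u t ≤ u s := by
  intro s
  induction s with
  | zero => intro _ t ht; interval_cases t; rfl
  | succ s ih =>
    intro hs t ht
    rcases Nat.eq_or_lt_of_le ht with h | h
    · rw [h]
    · exact le_trans (ih (by omega) t (by omega)) (hm s (by omega))

lemma finish_zero (k : ℕ) (hk : 2 ≤ k) (u : ℕ → ℝ)
    (hm : ∀ t, t + 2 ≤ k → 0 ≤ u t ∧ u t ≤ u (t+1))
    (hlast : u (k-1) = 0) : ∀ t, t ≤ k-1 → u t = 0 := by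
  intro t ht
  rcases Nat.eq_or_lt_of_le ht with h | h
  · rw [h, hlast]
  · have h1 : u t ≤ u (k-1) :=
      chain_le k u (fun t ht => (hm t ht).2) (k-1) (by omega) t (by omega)
    have h2 : 0 ≤ u t := (hm t (by omega)).1
    linarith [hlast ▸ h1]

lemma stepZ (r e X Y Z : ℝ) (hr : r ≠ 0) (hre : r * e = 1 - 2*r)
    (h : r * (2*Y - X - Z) = Y) : Z = -e*Y - X := by
  apply mul_left_cancel₀ hr
  linear_combination Y * hre - h

lemma stepZ' (r e X Y Z : ℝ) (hr : r ≠ 0) (hre : r * e = 2*r - 1)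
    (h : r * (2*Y - X - Z) = Y) : Z = e*Y - X := by
  apply mul_left_cancel₀ hr
  linear_combination (-Y) * hre - h

set_option maxHeartbeats 1000000 in
lemma key_s11 (μ : ℝ) (k : ℕ) (hk : 2 ≤ k) (b : ℕ → ℝ)
    (hμ0 : μ ≠ 0) (hμ1 : μ ≠ -1)
    (hlb : (-1 - Real.sqrt 2)/2 ≤ μ) (hub : μ ≤ (-1 + Real.sqrt 2)/2)
    (hR0 : (μ^2+μ) * (2 * b 0 - b 1) = b 0)
    (hRt : ∀ t, 1 ≤ t → t + 2 ≤ k → (μ^2+μ) * (2 * b t - b (t-1) - b (t+1)) = b t)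
    (hEnd : μ * (b (k-1) - b (k-2)) = b (k-1) ∨
            (μ^2+μ) * (b (k-1) - b (k-2)) = (μ+2) * b (k-1)) :
    ∀ t, t ≤ k - 1 → b t = 0 := by
  have hs2 : Real.sqrt 2 ^ 2 = 2 := Real.sq_sqrt (by norm_num)
  have hsnn : 0 ≤ Real.sqrt 2 := Real.sqrt_nonneg 2
  have hslt : Real.sqrt 2 < 3/2 := by nlinarith
  have hr0 : μ^2 + μ ≠ 0 := by
    intro h
    have h' : μ * (μ + 1) = 0 := by linarith [h, sq_nonneg μ]
    rcases mul_eq_zero.mp h' with h'' | h''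
    · exact hμ0 h''
    · exact hμ1 (by linarith)
  have hrle : μ^2 + μ ≤ 1/4 := by nlinarith
  obtain ⟨t2, rfl⟩ : ∃ t2, k = t2 + 2 := ⟨k - 2, by omega⟩
  have hk1 : t2 + 2 - 1 = t2 + 1 := by omega
  have hk2 : t2 + 2 - 2 = t2 := by omega
  rw [hk1, hk2] at hEnd
  have hs_facts : ∀ s : ℝ, s^2 = 1 → s ≠ 0 := by
    intro s hs h; rw [h] at hs; norm_num at hs
  rcases lt_or_gt_of_ne hr0 with hrneg | hrpos
  · -- r < 0 case : μ ∈ (-1, 0)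
    have hμneg : μ < 0 := by nlinarith
    have hμgt : -1 < μ := by nlinarith
    obtain ⟨s, hs1, hsb⟩ : ∃ s : ℝ, s^2 = 1 ∧ 0 ≤ s * b 0 := by
      rcases le_or_gt 0 (b 0) with h | h
      · exact ⟨1, by norm_num, by linarith⟩
      · exact ⟨-1, by norm_num, by linarith⟩
    have hre : (μ^2+μ) * ((2*(μ^2+μ) - 1)/(μ^2+μ)) = 2*(μ^2+μ) - 1 := by rw [mul_div_assoc', mul_div_cancel_left₀ _ hr0]
    set e : ℝ := (2*(μ^2+μ) - 1)/(μ^2+μ) with he_def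
    have he : 2 ≤ e := by
      rw [he_def, le_div_iff_of_neg hrneg]; linarith
    have h0 : 0 ≤ s * b 0 := hsb
    have h1 : s * b 1 = e * (s * b 0) := by
      have hb1 : b 1 = e * b 0 - 0 := stepZ' _ e 0 (b 0) (b 1) hr0 hre (by linarith [hR0])
      rw [hb1]; ring
    have hrec : ∀ t, 1 ≤ t → t + 2 ≤ t2 + 2 →
        s * b (t+1) = e * (s * b t) - s * b (t-1) := by
      intro t ht1 ht2
      obtain ⟨t', rfl⟩ : ∃ t', t = t' + 1 := ⟨t - 1, by omega⟩
      simp only [Nat.add_sub_cancel]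
      have hb := hRt (t'+1) (by omega) ht2
      simp only [Nat.add_sub_cancel] at hb
      have hb2 : b (t'+1+1) = e * b (t'+1) - b t' :=
        stepZ' _ e (b t') (b (t'+1)) (b (t'+1+1)) hr0 hre hb
      rw [hb2]; ring
    have hm := mono_rec (t2+2) e he (fun t => s * b t) h0 h1 hrec
    have hU1 : 0 ≤ s * b t2 := (hm t2 (le_refl _)).1
    have hU12 : s * b t2 ≤ s * b (t2+1) := (hm t2 (le_refl _)).2
    have hU2 : 0 ≤ s * b (t2+1) := le_trans hU1 hU12
    have hU2le : s * b (t2+1) ≤ 0 := by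
      rcases hEnd with heq | heq
      · have hU : μ * (s * b (t2+1) - s * b t2) = s * b (t2+1) := by
          linear_combination s * heq
        nlinarith [mul_nonpos_of_nonpos_of_nonneg hμneg.le
          (show (0:ℝ) ≤ s * b (t2+1) - s * b t2 by linarith)]
      · have hU : (μ^2+μ) * (s * b (t2+1) - s * b t2) = (μ+2) * (s * b (t2+1)) := by
          linear_combination s * heq
        nlinarith [mul_nonpos_of_nonpos_of_nonneg hrneg.le
          (show (0:ℝ) ≤ s * b (t2+1) - s * b t2 by linarith)]
    have hlast : s * b (t2+1) = 0 := le_antisymm hU2le hU2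
    intro t ht
    rw [hk1] at ht
    have hz := finish_zero (t2+2) (by omega) (fun t => s * b t) hm
      (by show s * b (t2+2-1) = 0; rw [hk1]; exact hlast) t (by omega)
    have hz' : s * b t = 0 := hz
    exact (mul_eq_zero.mp hz').resolve_left (hs_facts s hs1)
  · -- r > 0 case
    have hμcase : μ < -1 ∨ 0 < μ := by
      rcases lt_or_ge μ 0 with h | h
      · rcases lt_or_ge μ (-1) with h' | h'
        · exact Or.inl h'
        · exfalso; nlinarith
      · exact Or.inr (lt_of_le_of_ne h (Ne.symm hμ0))
    obtain ⟨s, hs1, hsb⟩ : ∃ s : ℝ, s^2 = 1 ∧ 0 ≤ s * b 0 := by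
      rcases le_or_gt 0 (b 0) with h | h
      · exact ⟨1, by norm_num, by linarith⟩
      · exact ⟨-1, by norm_num, by linarith⟩
    have hre : (μ^2+μ) * ((1 - 2*(μ^2+μ))/(μ^2+μ)) = 1 - 2*(μ^2+μ) := by rw [mul_div_assoc', mul_div_cancel_left₀ _ hr0]
    set e : ℝ := (1 - 2*(μ^2+μ))/(μ^2+μ) with he_def
    have he : 2 ≤ e := by
      rw [he_def, le_div_iff₀ hrpos]; linarith
    have h0 : 0 ≤ s * (-1)^0 * b 0 := by simpa using hsb
    have h1 : s * (-1)^1 * b 1 = e * (s * (-1)^0 * b 0) := by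
      have hb1 : b 1 = -e * b 0 - 0 := stepZ _ e 0 (b 0) (b 1) hr0 hre (by linarith [hR0])
      rw [hb1]; ring
    have hrec : ∀ t, 1 ≤ t → t + 2 ≤ t2 + 2 →
        s * (-1)^(t+1) * b (t+1) = e * (s * (-1)^t * b t) - s * (-1)^(t-1) * b (t-1) := by
      intro t ht1 ht2
      obtain ⟨t', rfl⟩ : ∃ t', t = t' + 1 := ⟨t - 1, by omega⟩
      simp only [Nat.add_sub_cancel]
      have hb := hRt (t'+1) (by omega) ht2
      simp only [Nat.add_sub_cancel] at hb
      have hb2 : b (t'+1+1) = -e * b (t'+1) - b t' :=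
        stepZ _ e (b t') (b (t'+1)) (b (t'+1+1)) hr0 hre hb
      rw [hb2]; ring
    have hm := mono_rec (t2+2) e he (fun t => s * (-1)^t * b t) h0 h1 hrec
    have hU1 : 0 ≤ s * (-1)^t2 * b t2 := (hm t2 (le_refl _)).1
    have hU12 : s * (-1)^t2 * b t2 ≤ s * (-1)^(t2+1) * b (t2+1) := (hm t2 (le_refl _)).2
    have hU2 : 0 ≤ s * (-1)^(t2+1) * b (t2+1) := le_trans hU1 hU12
    have hU2le : s * (-1)^(t2+1) * b (t2+1) ≤ 0 := by
      rcases hEnd with heq | heq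
      · have hU : μ * (s * (-1)^(t2+1) * b (t2+1) + s * (-1)^t2 * b t2)
            = s * (-1)^(t2+1) * b (t2+1) := by
          linear_combination (s * (-1)^(t2+1)) * heq
        rcases hμcase with hc | hc
        · nlinarith [mul_nonpos_of_nonpos_of_nonneg (show μ ≤ 0 by linarith)
            (show (0:ℝ) ≤ s * (-1)^(t2+1) * b (t2+1) + s * (-1)^t2 * b t2 by linarith)]
        · have hμlt : μ < 1/4 := by linarith
          nlinarith [mul_nonpos_of_nonneg_of_nonpos hc.le
            (show s * (-1)^t2 * b t2 - s * (-1)^(t2+1) * b (t2+1) ≤ (0:ℝ) by linarith)]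
      · have hU : (μ^2+μ) * (s * (-1)^(t2+1) * b (t2+1) + s * (-1)^t2 * b t2)
            = (μ+2) * (s * (-1)^(t2+1) * b (t2+1)) := by
          linear_combination (s * (-1)^(t2+1)) * heq
        have hmu32 : -(5/4) < μ := by nlinarith
        nlinarith [mul_le_mul_of_nonneg_right hrle
          (show (0:ℝ) ≤ s * (-1)^(t2+1) * b (t2+1) + s * (-1)^t2 * b t2 by linarith)]
    have hlast : s * (-1)^(t2+1) * b (t2+1) = 0 := le_antisymm hU2le hU2
    intro t ht
    rw [hk1] at ht
    have hz := finish_zero (t2+2) (by omega) (fun t => s * (-1)^t * b t) hm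
      (by show s * (-1)^(t2+2-1) * b (t2+2-1) = 0; rw [hk1]; exact hlast) t (by omega)
    have hz' : s * (-1)^t * b t = 0 := hz
    exact (mul_eq_zero.mp hz').resolve_left
      (mul_ne_zero (hs_facts s hs1) (pow_ne_zero _ (by norm_num)))


set_option maxHeartbeats 1000000 in
/-- Every eigenvalue `μ ∉ {0, -1}` of the adjacency matrix of the antiregular
graph `H_n = C(1,…,1)` satisfies `μ < (-1-√2)/2` or `μ > (-1+√2)/2`. -/
theorem stmt11 (n : ℕ) (hn : 1 ≤ n) (μ : ℝ)
    (hμ : ∃ x : (Σ i : Fin n, Fin 1) → ℝ, x ≠ 0 ∧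
      ((Cgraph n fun _ => 1).adjMatrix ℝ).mulVec x = μ • x)
    (h0 : μ ≠ 0) (h1 : μ ≠ -1) :
    μ < (-1 - Real.sqrt 2) / 2 ∨ (-1 + Real.sqrt 2) / 2 < μ := by
  by_contra hcon
  push_neg at hcon
  obtain ⟨hlb, hub⟩ := hcon
  have hs2 : Real.sqrt 2 ^ 2 = 2 := Real.sq_sqrt (by norm_num)
  have hsnn : 0 ≤ Real.sqrt 2 := Real.sqrt_nonneg 2
  have hslt : Real.sqrt 2 < 3/2 := by nlinarith
  obtain ⟨x, hx0, hxeq⟩ := hμ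
  set z : ℕ → ℝ := fun i => if h : i < n then x ⟨⟨i, h⟩, 0⟩ else 0 with hz_def
  have hz : ∀ (i : ℕ) (h : i < n), z i = x ⟨⟨i, h⟩, 0⟩ := by
    intro i h; rw [hz_def]; simp [h]
  have hE : Econd n μ z := fun j hj => eqE n μ x hxeq z hz j hj
  -- final contradiction helper
  have hdone : (∀ i, i < n → z i = 0) → False := by
    intro hzall
    apply hx0
    funext v
    obtain ⟨i, j⟩ := v
    have hj : j = 0 := Subsingleton.elim _ _
    subst hj
    have := hzall i.val i.isLt
    rw [hz i.val i.isLt] at this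
    simpa using this
  -- case n = 1
  rcases Nat.lt_or_ge n 2 with hn2 | hn2
  · have hn1 : n = 1 := by omega
    subst hn1
    have hA := hE 0 (by norm_num)
    simp at hA
    apply hdone
    intro i hi
    interval_cases i
    rcases hA with h | h
    · exact absurd h h0
    · exact h
  have hclose : z 0 = z 1 := locClose hE hn2 h0 h1
  have htop : μ * z (n-2) = z (n-1) := locTop hE hn2
  rcases Nat.lt_or_ge n 3 with hn3 | hn3
  · -- n = 2
    have hn2' : n = 2 := by omega
    subst hn2'
    norm_num at htop
    have hz0 : z 0 = 0 := by
      have hμ1' : μ - 1 ≠ 0 := by intro h; nlinarith [(by linarith : μ = 1)]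
      have : (μ - 1) * z 0 = 0 := by
        rw [hclose] at htop ⊢
        linarith [htop]
      exact (mul_eq_zero.mp this).resolve_left hμ1'
    apply hdone
    intro i hi
    interval_cases i
    · exact hz0
    · rw [← hclose]; exact hz0
  rcases Nat.lt_or_ge n 4 with hn4 | hn4
  · -- n = 3
    have hn3' : n = 3 := by omega
    subst hn3'
    norm_num at htop
    have hC := locC hE 0 (by norm_num) (by norm_num)
    norm_num at hC
    -- hC : (μ+1)*(z 2 - z 0) = z 1
    have hz1 : z 1 = 0 := by
      have hmu2 : μ^2 - 2 ≠ 0 := by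
        intro h
        nlinarith
      have : (μ^2 - 2) * z 1 = 0 := by
        rw [hclose] at hC
        linear_combination hC + (μ+1) * htop - (μ^2-2) * (by rfl : z 1 = z 1)
      exact (mul_eq_zero.mp this).resolve_left hmu2
    apply hdone
    intro i hi
    interval_cases i
    · rw [hclose]; exact hz1
    · exact hz1
    · rw [← htop, hz1, mul_zero]
  -- main case : n ≥ 4
  set k : ℕ := n / 2 with hk_def
  have hk2 : 2 ≤ k := by omega
  set b : ℕ → ℝ := fun t => z (n - 2 - 2*t) with hb_def
  have hR0 : (μ^2+μ) * (2 * b 0 - b 1) = b 0 := by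
    obtain ⟨m, rfl⟩ : ∃ m, n = m + 4 := ⟨n - 4, by omega⟩
    have e0 : m + 4 - 2 - 2*0 = m+2 := by omega
    have e1 : m + 4 - 2 - 2*1 = m := by omega
    show (μ^2+μ) * (2 * z (m+4-2-2*0) - z (m+4-2-2*1)) = z (m+4-2-2*0)
    rw [e0, e1]
    have htop' : μ * z (m+2) = z (m+3) := by
      have := htop; rw [show m+4-2 = m+2 from by omega, show m+4-1 = m+3 from by omega] at this
      exact this
    have hI := locI hE m (by omega) (by rw [show m+4-1-(m+2) = 1 from by omega]; decide)
    have hC := locC hE (m+1) (by omega)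
      (by rw [show m+4-1-(m+1+2) = 0 from by omega]; decide)
    rw [show m+1+2 = m+3 from by omega, show m+1+1 = m+2 from by omega] at hC
    linear_combination hC + (μ+1) * htop' - (μ+1) * hI
  have hRt : ∀ t, 1 ≤ t → t + 2 ≤ k → (μ^2+μ) * (2 * b t - b (t-1) - b (t+1)) = b t := by
    intro t ht1 ht2
    obtain ⟨m, hm⟩ : ∃ m, n = 2*t + 4 + m := ⟨n - (2*t+4), by omega⟩
    subst hm
    have e0 : 2*t+4+m - 2 - 2*t = m+2 := by omega
    have e1 : 2*t+4+m - 2 - 2*(t-1) = m+4 := by omega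
    have e2 : 2*t+4+m - 2 - 2*(t+1) = m := by omega
    show (μ^2+μ) * (2 * z (2*t+4+m-2-2*t) - z (2*t+4+m-2-2*(t-1)) - z (2*t+4+m-2-2*(t+1)))
        = z (2*t+4+m-2-2*t)
    rw [e0, e1, e2]
    have hC := locC hE (m+1) (by omega)
      (by rw [show 2*t+4+m-1-(m+1+2) = 2*t from by omega, Nat.even_iff]; omega)
    rw [show m+1+2 = m+3 from by omega, show m+1+1 = m+2 from by omega] at hC
    have hI1 := locI hE (m+2) (by omega)
      (by rw [show 2*t+4+m-1-(m+2+2) = 2*t-1 from by omega, Nat.even_iff]; omega)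
    rw [show m+2+2 = m+4 from by omega, show m+2+1 = m+3 from by omega] at hI1
    have hI2 := locI hE m (by omega)
      (by rw [show 2*t+4+m-1-(m+2) = 2*t+1 from by omega, Nat.even_iff]; omega)
    linear_combination hC + (μ+1) * hI1 - (μ+1) * hI2
  have hEnd : μ * (b (k-1) - b (k-2)) = b (k-1) ∨
      (μ^2+μ) * (b (k-1) - b (k-2)) = (μ+2) * b (k-1) := by
    rcases Nat.even_or_odd n with he | ho
    · left
      obtain ⟨c, hc⟩ := he
      have hck : k = c := by omega
      have e0 : n - 2 - 2*(k-1) = 0 := by omega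
      have e1 : n - 2 - 2*(k-2) = 2 := by omega
      show μ * (z (n-2-2*(k-1)) - z (n-2-2*(k-2))) = z (n-2-2*(k-1))
      rw [e0, e1]
      have hI := locI hE 0 (by omega) (by rw [show n-1-(0+2) = n-3 from by omega, Nat.even_iff]; omega)
      norm_num at hI
      rw [hI, ← hclose]
    · right
      obtain ⟨c, hc⟩ := ho
      have hck : k = c := by omega
      have e0 : n - 2 - 2*(k-1) = 1 := by omega
      have e1 : n - 2 - 2*(k-2) = 3 := by omega
      show (μ^2+μ) * (z (n-2-2*(k-1)) - z (n-2-2*(k-2))) = (μ+2) * z (n-2-2*(k-1))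
      rw [e0, e1]
      have hC := locC hE 0 (by omega) (by rw [show n-1-(0+2) = n-3 from by omega, Nat.even_iff]; omega)
      norm_num at hC
      have hI := locI hE 1 (by omega) (by rw [show n-1-(1+2) = n-4 from by omega, Nat.even_iff]; omega)
      norm_num at hI
      -- hC : (μ+1)*(z 2 - z 0) = z 1 ; hI : μ*(z 1 - z 3) = z 2 ; hclose : z 0 = z 1
      linear_combination hC + (μ+1) * hI + (μ+1) * hclose
  have hzero := key_s11 μ k hk2 b h0 h1 hlb hub hR0 hRt hEnd
  apply hdone
  intro i hi
  rcases Nat.even_or_odd (n - i) with hpar | hpar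
  · -- i is an "independent" vertex : i = n-2-2t
    have ht : ∃ t, t ≤ k - 1 ∧ n - 2 - 2*t = i := by
      refine ⟨(n - 2 - i)/2, by omega, ?_⟩
      obtain ⟨c, hc⟩ := hpar
      omega
    obtain ⟨t, htk, hti⟩ := ht
    have := hzero t htk
    rw [hb_def] at this
    simp only at this
    rw [hti] at this
    exact this
  · -- i is a "clique" vertex
    rcases Nat.eq_or_lt_of_le (Nat.succ_le_of_lt hi) with htop' | hlt
    · -- i = n-1
      have hieq : i = n - 1 := by omega
      have hb0 : z (n-2) = 0 := by
        have := hzero 0 (by omega)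
        rw [hb_def] at this; simp only at this
        rw [show n-2-2*0 = n-2 from by omega] at this
        exact this
      rw [hieq, ← htop, hb0, mul_zero]
    · -- i ≤ n-2, C-type, i odd-distance from top
      rcases Nat.eq_zero_or_pos i with hizero | hipos
      · -- i = 0, n odd
        subst hizero
        have : z 1 = 0 := by
          have h1k : ∃ t, t ≤ k - 1 ∧ n - 2 - 2*t = 1 := by
            obtain ⟨c, hc⟩ := hpar
            exact ⟨(n-3)/2, by omega, by omega⟩
          obtain ⟨t, htk, hti⟩ := h1k
          have := hzero t htk
          rw [hb_def] at this; simp only at this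
          rw [hti] at this; exact this
        rw [hclose, this]
      · -- 1 ≤ i ≤ n-3
        obtain ⟨j, rfl⟩ : ∃ j, i = j + 1 := ⟨i - 1, by omega⟩
        have hile : j + 1 ≤ n - 3 := by obtain ⟨c,hc⟩ := hpar; omega
        have hI := locI hE j (by omega)
          (by rw [show n-1-(j+2) = n-3-j from by omega, Nat.even_iff]; obtain ⟨c,hc⟩ := hpar; omega)
        have hzj : z j = 0 := by
          have ht : ∃ t, t ≤ k - 1 ∧ n - 2 - 2*t = j := by
            obtain ⟨c,hc⟩ := hpar
            exact ⟨(n-2-j)/2, by omega, by omega⟩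
          obtain ⟨t, htk, hti⟩ := ht
          have := hzero t htk
          rw [hb_def] at this; simp only at this
          rw [hti] at this; exact this
        have hzj2 : z (j+2) = 0 := by
          have ht : ∃ t, t ≤ k - 1 ∧ n - 2 - 2*t = j+2 := by
            obtain ⟨c,hc⟩ := hpar
            exact ⟨(n-4-j)/2, by omega, by omega⟩
          obtain ⟨t, htk, hti⟩ := ht
          have := hzero t htk
          rw [hb_def] at this; simp only at this
          rw [hti] at this; exact this
        rw [← hI, hzj, hzj2, sub_zero, mul_zero]
end
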